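/- arXiv:2504.16302 — 10 statements merged into one kernel-verified Lean document; each statement's English description precedes it below -/
import Mathlib

section
/- For every n ≥ 3, the number e_{n,1} := n!·[tⁿ]E1 of leaf-labeled time-consistent galled trees with n leaves and exactly one gall equals (n + 2)·(2n)!/(2ⁿ·n!) − 3·2^{n−1}·n!. -/
open PowerSeries

namespace GalledAux

/-- coefficients of (1-2t)^{-1/2} -/
noncomputable def cS : ℕ → ℚ := fun n => (2*n).factorial / (2^n * (n.factorial)^2)

lemma cS_rec (n : ℕ) : ((n:ℚ)+1) * cS (n+1) = (2*n+1) * cS n := by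
  unfold cS
  rw [show 2*(n+1) = (2*n)+1+1 by ring, Nat.factorial_succ, Nat.factorial_succ,
    Nat.factorial_succ]
  have h1 : ((2*n).factorial : ℚ) ≠ 0 := by exact_mod_cast (2*n).factorial_ne_zero
  have h2 : ((n).factorial : ℚ) ≠ 0 := by exact_mod_cast n.factorial_ne_zero
  have h3 : ((2:ℚ)^n) ≠ 0 := by positivity
  push_cast
  field_simp
  ring

noncomputable def S : PowerSeries ℚ := PowerSeries.mk cS

lemma cS_zero : cS 0 = 1 := by norm_num [cS]
lemma cS_one : cS 1 = 1 := by norm_num [cS, Nat.factorial]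

lemma S0 : constantCoeff S = 1 := by
  rw [← coeff_zero_eq_constantCoeff]; simp [S, cS_zero]

lemma coeff_one_sub_two_X_mul (f : PowerSeries ℚ) (n : ℕ) :
    coeff (n+1) ((1 - 2*X) * f) = coeff (n+1) f - 2 * coeff n f := by
  have h : (1 - 2*X) * f = f - X * (C 2 * f) := by
    rw [map_ofNat]; ring
  rw [h, map_sub, coeff_succ_X_mul, coeff_C_mul]

lemma coeff_zero_one_sub_two_X_mul (f : PowerSeries ℚ) :
    coeff 0 ((1 - 2*X) * f) = coeff 0 f := by
  simp [coeff_zero_eq_constantCoeff, map_mul]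

lemma Sderiv : (1 - 2*X) * d⁄dX ℚ S = S := by
  ext n
  cases n with
  | zero =>
      rw [coeff_zero_one_sub_two_X_mul, coeff_derivative]
      simp [S, cS_zero, cS_one]
  | succ n =>
      rw [coeff_one_sub_two_X_mul, coeff_derivative, coeff_derivative]
      simp only [S, coeff_mk]
      have h1 := cS_rec (n+1)
      push_cast at h1 ⊢
      linear_combination h1

lemma deriv12 : d⁄dX ℚ (1 - 2*X : PowerSeries ℚ) = -2 := by
  have hd2 : d⁄dX ℚ (2 : PowerSeries ℚ) = 0 := by
    rw [← map_ofNat C 2, derivative_C]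
  rw [map_sub, Derivation.leibniz]
  simp [smul_eq_mul, hd2]

lemma h12_ne : (1 - 2*X : PowerSeries ℚ) ≠ 0 := by
  intro h
  have := congrArg (constantCoeff) h
  simp at this

lemma eq_C_of_deriv {f : PowerSeries ℚ} (h : d⁄dX ℚ f = 0) :
    f = C (constantCoeff f) := by
  apply derivative.ext
  · rw [h, derivative_C]
  · simp

lemma S2eq : S^2 * (1 - 2*X) = 1 := by
  have hdP : d⁄dX ℚ (S^2 * (1 - 2*X)) = 0 := by
    rw [Derivation.leibniz, deriv12, sq, Derivation.leibniz]
    simp only [smul_eq_mul]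
    linear_combination (2*S) * Sderiv
  have hc : constantCoeff (S^2 * (1 - 2*X)) = 1 := by
    simp [map_mul, map_pow, S0]
  rw [eq_C_of_deriv hdP, hc, map_one]

lemma S3eq : S^3 = d⁄dX ℚ S := by
  apply mul_left_cancel₀ h12_ne
  calc (1-2*X) * S^3 = (S^2*(1-2*X))*S := by ring
  _ = S := by rw [S2eq, one_mul]
  _ = (1-2*X) * d⁄dX ℚ S := Sderiv.symm

noncomputable def G : PowerSeries ℚ := PowerSeries.mk (fun n => (2:ℚ)^n)

lemma Geq : (1 - 2*X) * G = 1 := by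
  ext n
  cases n with
  | zero => rw [coeff_zero_one_sub_two_X_mul]; simp [G]
  | succ n =>
      rw [coeff_one_sub_two_X_mul]
      simp [G, coeff_one, pow_succ]
      ring

lemma S2G : S^2 = G := by
  calc S^2 = S^2 * ((1-2*X)*G) := by rw [Geq, mul_one]
  _ = (S^2*(1-2*X))*G := by ring
  _ = G := by rw [S2eq, one_mul]

end GalledAux

open GalledAux

/-- For `n ≥ 3`, the number `e_{n,1} = n!·[tⁿ]E1` of leaf-labeled time-consistent
galled trees with `n` leaves and exactly one gall equals
`(n+2)·(2n)!/(2ⁿ·n!) - 3·2^(n-1)·n!`, where `E1 = (1/2)·U³·(1-U)⁻³` and `U` is the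
unique series with zero constant coefficient satisfying `U = t + U²/2`. -/
theorem stmt_3 (U E1 : PowerSeries ℚ) (h0 : constantCoeff U = 0)
    (hU : U = PowerSeries.X + (1 / 2 : ℚ) • U ^ 2)
    (hE1 : E1 = (1 / 2 : ℚ) • (U ^ 3 * ((1 - U)⁻¹) ^ 3)) :
    ∀ n : ℕ, 3 ≤ n →
      (n.factorial : ℚ) * coeff n E1
        = ((n : ℚ) + 2) * (2 * n).factorial / (2 ^ n * n.factorial)
          - 3 * 2 ^ (n - 1) * n.factorial := by
  have h2 : (C (1/2 : ℚ)) * 2 = 1 := by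
    rw [← map_ofNat (C : ℚ →+* PowerSeries ℚ) 2, ← map_mul]; norm_num
  rw [smul_eq_C_mul] at hU
  have hV2 : (1-U)^2 = 1 - 2*X := by
    linear_combination (-2 : PowerSeries ℚ) * hU - U^2 * h2
  have hcV : constantCoeff (1-U) = 1 := by simp [h0]
  have hW2 : (S*(1-U))^2 = 1 := by
    calc (S*(1-U))^2 = S^2*((1-U)^2) := by ring
    _ = S^2*(1-2*X) := by rw [hV2]
    _ = 1 := S2eq
  have hW : S*(1-U) = 1 := by
    have hfac : (S*(1-U) - 1)*(S*(1-U) + 1) = 0 := by linear_combination hW2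
    rcases mul_eq_zero.mp hfac with h | h
    · exact sub_eq_zero.mp h
    · exfalso
      have := congrArg (constantCoeff) h
      simp [map_mul, S0, hcV] at this
  have hInv : (1-U)⁻¹ = S := by
    rw [PowerSeries.inv_eq_iff_mul_eq_one (by rw [hcV]; norm_num)]
    exact hW
  have hUS : U * S = S - 1 := by linear_combination -hW
  have key : U^3 * S^3 = S^3 - 3*S^2 + 3*S - 1 := by
    calc U^3 * S^3 = (U*S)^3 := by ring
    _ = (S-1)^3 := by rw [hUS]
    _ = S^3 - 3*S^2 + 3*S - 1 := by ring
  have hco3 : ∀ (f : PowerSeries ℚ) (k : ℕ),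
      coeff k ((3 : PowerSeries ℚ)*f) = 3 * coeff k f := by
    intro f k
    rw [show (3 : PowerSeries ℚ) = C 3 from (map_ofNat _ 3).symm, coeff_C_mul]
  intro n hn
  obtain ⟨m, rfl⟩ : ∃ m, n = m + 1 := ⟨n-1, (Nat.succ_pred_eq_of_pos (by omega)).symm⟩
  have hc3 : coeff (m+1) (S^3) = cS (m+2) * ((m:ℚ)+2) := by
    rw [S3eq, coeff_derivative]
    simp only [S, coeff_mk]
    push_cast
    ring
  have hc2 : coeff (m+1) (S^2) = 2^(m+1) := by rw [S2G]; simp [G]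
  have hc1 : coeff (m+1) S = cS (m+1) := by simp [S]
  have hcone : coeff (m+1) (1 : PowerSeries ℚ) = 0 := by simp [coeff_one]
  have hcE : coeff (m+1) E1
      = (1/2) * (cS (m+2) * ((m:ℚ)+2) - 3*2^(m+1) + 3*cS (m+1)) := by
    rw [hE1, hInv]
    rw [show U^3 * S^3 = S^3 - 3*S^2 + 3*S - 1 from key]
    simp only [map_smul, map_sub, map_add, hco3, smul_eq_mul, hc3, hc2, hc1, hcone]
    ring
  rw [hcE]
  have hrec := cS_rec (m+1)
  push_cast at hrec
  have h3 : cS (m+2) * ((m:ℚ)+2) = (2*m+3) * cS (m+1) := by linear_combination hrec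
  rw [h3]
  have hcm : cS (m+1) = ((2*(m+1)).factorial : ℚ) / (2^(m+1) * ((m+1).factorial)^2) := rfl
  rw [hcm]
  have h1 : (((m+1).factorial : ℚ)) ≠ 0 := by exact_mod_cast (m+1).factorial_ne_zero
  have h4 : ((2:ℚ)^(m+1)) ≠ 0 := by positivity
  rw [show (m+1) - 1 = m from rfl]
  push_cast
  field_simp
  ring
end

section
/- As n → ∞, the number e_{n,1} := n!·[tⁿ]E1 of leaf-labeled time-consistent galled trees with n leaves and exactly one gall satisfies the asymptotic equivalence e_{n,1} ~ (n^{1/2}/√π)·2ⁿ·n! (equivalently, e_{n,1} ~ √2·n^{n+1}·(2/e)ⁿ), in the sense that the ratio of the two sides tends to 1. -/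
open PowerSeries Filter Real Topology

noncomputable section
namespace GTaux


/-- rational sequence `(2n)!/(2^n (n!)^2)` -/
def aseq (n : ℕ) : ℚ := (2*n).factorial / (2^n * (n.factorial)^2)
/-- rational sequence `(2n+1)!/(2^n (n!)^2)` -/
def bseq (n : ℕ) : ℚ := (2*n+1).factorial / (2^n * (n.factorial)^2)

lemma fac_ne (n : ℕ) : ((n.factorial : ℚ)) ≠ 0 := by
  exact_mod_cast n.factorial_ne_zero

lemma aseq_rec (n : ℕ) : (n+1 : ℚ) * aseq (n+1) = (2*n+1) * aseq n := by
  have h2 : 2*(n+1) = (2*n+1)+1 := by ring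
  unfold aseq
  rw [h2]
  have := fac_ne n
  have := fac_ne (2*n)
  simp only [Nat.factorial_succ]
  push_cast
  field_simp
  ring

lemma bseq_rec (n : ℕ) : (n+1 : ℚ) * bseq (n+1) = (2*n+3) * bseq n := by
  have h2 : 2*(n+1)+1 = ((2*n+1)+1)+1 := by ring
  unfold bseq
  rw [h2]
  have := fac_ne n
  have := fac_ne (2*n+1)
  simp only [Nat.factorial_succ]
  push_cast
  field_simp
  ring

lemma coeff_rec (F : PowerSeries ℚ) (c : ℚ)
    (h : (1 - 2*PowerSeries.X) * (d⁄dX ℚ) F = (C c) * F) (n : ℕ) :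
    (n+1 : ℚ) * coeff (n+1) F = (2*n + c) * coeff n F := by
  have h' := congrArg (coeff n) h
  rw [sub_mul, one_mul, mul_assoc, map_sub, coeff_derivative] at h'
  rw [show (2 : PowerSeries ℚ) * (PowerSeries.X * (d⁄dX ℚ) F)
      = C 2 * (PowerSeries.X * (d⁄dX ℚ) F) by rw [map_ofNat]] at h'
  rw [coeff_C_mul, coeff_C_mul] at h'
  cases n with
  | zero =>
    rw [coeff_zero_X_mul] at h'
    simpa [mul_comm] using h'
  | succ m =>
    rw [coeff_succ_X_mul, coeff_derivative] at h'
    push_cast at h' ⊢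
    linarith [h']

/-- determination of coefficients from the ODE recurrence -/
lemma coeff_eq_of_rec (F : PowerSeries ℚ) (g : ℕ → ℚ) (c : ℚ)
    (h : (1 - 2*PowerSeries.X) * (d⁄dX ℚ) F = (C c) * F)
    (h0 : coeff 0 F = g 0)
    (hg : ∀ n : ℕ, (n+1 : ℚ) * g (n+1) = (2*n + c) * g n) :
    ∀ n, coeff n F = g n := by
  intro n
  induction n with
  | zero => exact h0
  | succ m ih =>
    have h1 := coeff_rec F c h m
    have h2 := hg m
    rw [ih] at h1
    have hm : ((m : ℚ) + 1) ≠ 0 := by positivity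
    exact mul_left_cancel₀ hm (h1.trans h2.symm)



lemma aseq0 : aseq 0 = 1 := by simp [aseq]
lemma bseq0 : bseq 0 = 1 := by simp [bseq]

lemma coeff_E1 (U E1 : PowerSeries ℚ) (h0 : constantCoeff U = 0)
    (hU : U = PowerSeries.X + (1 / 2 : ℚ) • U ^ 2)
    (hE1 : E1 = (1 / 2 : ℚ) • (U ^ 3 * ((1 - U)⁻¹) ^ 3)) (n : ℕ) :
    coeff n E1
      = (1/2) * (bseq n + 3 * aseq n - 3 * 2^n - (if n = 0 then 1 else 0)) := by
  set A : PowerSeries ℚ := (1 - U)⁻¹ with hA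
  have hS0 : constantCoeff (1 - U) = 1 := by
    rw [map_sub, h0, map_one, sub_zero]
  have hSA : (1 - U) * A = 1 :=
    PowerSeries.mul_inv_cancel _ (by rw [hS0]; norm_num)
  have hA0 : constantCoeff A = 1 := by
    rw [hA, PowerSeries.constantCoeff_inv, hS0]; norm_num
  have hAne : A ≠ 0 := fun h => by simp [h] at hA0
  -- U^2 = 2U - 2X
  have hU2 : U^2 = 2*U - 2*PowerSeries.X := by
    have h2U : (2:ℚ) • U = (2:ℚ) • (PowerSeries.X : PowerSeries ℚ) + U^2 := by
      nth_rewrite 1 [hU]; rw [smul_add, smul_smul]; norm_num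
    rw [smul_eq_C_mul, smul_eq_C_mul, map_ofNat] at h2U
    linear_combination -h2U
  have hS2 : (1-U)^2 = 1 - 2*PowerSeries.X := by linear_combination hU2
  have hA2 : A^2 * (1 - 2*PowerSeries.X) = 1 := by
    rw [← hS2]
    calc A^2 * (1-U)^2 = ((1-U)*A)^2 := by ring
    _ = 1 := by rw [hSA, one_pow]
  -- differentiate
  set D := d⁄dX ℚ with hD
  have hDlin : D (1 - 2*PowerSeries.X) = -2 := by
    rw [show ((1:PowerSeries ℚ) - 2*PowerSeries.X) = 1 - (C 2) * PowerSeries.X by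
      rw [map_ofNat]]
    rw [map_sub, Derivation.map_one_eq_zero, Derivation.leibniz, derivative_X,
      derivative_C, smul_eq_mul, smul_eq_mul, map_ofNat]
    ring
  have hDA2 : D (A^2) = 2 * A * D A := by
    rw [Derivation.leibniz_pow]
    simp only [nsmul_eq_mul, smul_eq_mul, Nat.cast_ofNat, pow_one]
    ring
  have hDA3 : D (A^3) = 3 * A^2 * D A := by
    rw [Derivation.leibniz_pow]
    simp only [nsmul_eq_mul, smul_eq_mul, Nat.cast_ofNat]
    norm_num
    ring
  have hzero : D (A^2 * (1 - 2*PowerSeries.X)) = 0 := by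
    rw [hA2, Derivation.map_one_eq_zero]
  rw [Derivation.leibniz, smul_eq_mul, smul_eq_mul, hDlin, hDA2] at hzero
  -- (1-2X) * D A = A
  have h2Ane : (2*A : PowerSeries ℚ) ≠ 0 := by
    intro h
    have hc : constantCoeff (2*A) = 2 := by
      rw [map_mul, hA0, mul_one, map_ofNat]
    rw [h, map_zero] at hc
    norm_num at hc
  have hDA : (1 - 2*PowerSeries.X) * D A = A := by
    apply mul_left_cancel₀ h2Ane
    linear_combination hzero
  have hodeA : (1 - 2*PowerSeries.X) * D A = (C 1) * A := by
    rw [map_one, one_mul]; exact hDA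
  have hodeA2 : (1 - 2*PowerSeries.X) * D (A^2) = (C 2) * A^2 := by
    rw [hDA2, map_ofNat]; linear_combination (2*A) * hDA
  have hodeA3 : (1 - 2*PowerSeries.X) * D (A^3) = (C 3) * A^3 := by
    rw [hDA3, map_ofNat]; linear_combination (3*A^2) * hDA
  have cA : ∀ m, coeff m A = aseq m := by
    apply coeff_eq_of_rec A aseq 1 hodeA
    · rw [coeff_zero_eq_constantCoeff_apply, hA0, aseq0]
    · intro m; rw [aseq_rec]
  have cA2 : ∀ m, coeff m (A^2) = 2^m := by
    apply coeff_eq_of_rec _ (fun m => 2^m) 2 hodeA2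
    · rw [coeff_zero_eq_constantCoeff_apply, map_pow, hA0]; norm_num
    · intro m; rw [pow_succ]; ring
  have cA3 : ∀ m, coeff m (A^3) = bseq m := by
    apply coeff_eq_of_rec _ bseq 3 hodeA3
    · rw [coeff_zero_eq_constantCoeff_apply, map_pow, hA0, bseq0]; norm_num
    · intro m; rw [bseq_rec]
  -- E1 expansion
  have hUA : U * A = A - 1 := by
    have : U * A = A - (1-U)*A := by ring
    rw [this, hSA]
  have hE1' : E1 = (1/2 : ℚ) • (A^3 - 3*A^2 + 3*A - 1) := by
    rw [hE1]
    congr 1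
    calc U^3 * A^3 = (U*A)^3 := by ring
    _ = (A-1)^3 := by rw [hUA]
    _ = A^3 - 3*A^2 + 3*A - 1 := by ring
  rw [hE1', LinearMap.map_smul, smul_eq_mul,
    show (3:PowerSeries ℚ) = C 3 from (map_ofNat (C (R := ℚ)) 3).symm]
  rw [map_sub, map_add, map_sub, coeff_one, coeff_C_mul, coeff_C_mul, cA3, cA2, cA]
  ring


theorem main (U E1 : PowerSeries ℚ) (h0 : constantCoeff U = 0)
    (hU : U = PowerSeries.X + (1 / 2 : ℚ) • U ^ 2)
    (hE1 : E1 = (1 / 2 : ℚ) • (U ^ 3 * ((1 - U)⁻¹) ^ 3)) :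
    Tendsto (fun n : ℕ =>
        ((n.factorial : ℝ) * ((coeff n E1 : ℚ) : ℝ)) /
          ((n : ℝ) ^ ((1 : ℝ) / 2) / Real.sqrt π * 2 ^ n * n.factorial))
      atTop (nhds 1) ∧
    Tendsto (fun n : ℕ =>
        ((n.factorial : ℝ) * ((coeff n E1 : ℚ) : ℝ)) /
          (Real.sqrt 2 * (n : ℝ) ^ (n + 1) * (2 / Real.exp 1) ^ n))
      atTop (nhds 1) := by
  have hP : (0:ℝ) < Real.sqrt π := Real.sqrt_pos.mpr Real.pi_pos
  set s : ℕ → ℝ := Stirling.stirlingSeq with hsdef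
  have hs : Tendsto s atTop (𝓝 (Real.sqrt π)) := Stirling.tendsto_stirlingSeq_sqrt_pi
  have h2n : Tendsto (fun n : ℕ => 2*n) atTop atTop :=
    tendsto_atTop_mono (fun n => by simp [id]; omega) tendsto_id
  have hs2 : Tendsto (fun n => s (2*n)) atTop (𝓝 (Real.sqrt π)) := hs.comp h2n
  have hq : Tendsto (fun n => s (2*n)/(s n)^2) atTop
      (𝓝 (Real.sqrt π/(Real.sqrt π)^2)) := hs2.div (hs.pow 2) (by positivity)
  have hinv : Tendsto (fun n : ℕ => ((n:ℝ))⁻¹) atTop (𝓝 0) :=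
    tendsto_inv_atTop_nhds_zero_nat
  have hrs : Tendsto (fun n : ℕ => (Real.sqrt (n:ℝ))⁻¹) atTop (𝓝 0) := by
    have h1 : Tendsto (fun n : ℕ => Real.sqrt ((n:ℝ)⁻¹)) atTop (𝓝 (Real.sqrt 0)) :=
      (Real.continuous_sqrt.tendsto 0).comp hinv
    simpa using h1
  have hfrac : Tendsto (fun n : ℕ => (2*(n:ℝ)+1)/(2*(n:ℝ))) atTop (𝓝 1) := by
    have h1 : Tendsto (fun n : ℕ => 1 + ((n:ℝ))⁻¹/2) atTop (𝓝 (1 + 0/2)) :=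
      tendsto_const_nhds.add (hinv.div_const 2)
    norm_num at h1
    refine h1.congr' ?_
    filter_upwards [eventually_ge_atTop 1] with n hn
    have hx : (0:ℝ) < n := by exact_mod_cast hn
    field_simp
  -- the comparison function
  set g : ℕ → ℝ := fun n =>
      Real.sqrt π * (s (2*n)/(s n)^2) * ((2*(n:ℝ)+1)/(2*(n:ℝ)))
      + (3*Real.sqrt π/2) * (s (2*n)/(s n)^2) * ((n:ℝ))⁻¹
      - (3/2)*Real.sqrt π*(Real.sqrt (n:ℝ))⁻¹ with hgdef
  have hg : Tendsto g atTop (𝓝 1) := by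
    have := (((hq.const_mul (Real.sqrt π)).mul hfrac).add
      ((hq.const_mul (3*Real.sqrt π/2)).mul hinv)).sub (hrs.const_mul ((3/2)*Real.sqrt π))
    have hval : Real.sqrt π * (Real.sqrt π/(Real.sqrt π)^2) * 1
        + (3*Real.sqrt π/2) * (Real.sqrt π/(Real.sqrt π)^2) * 0
        - (3/2)*Real.sqrt π*0 = 1 := by
      field_simp; ring
    rw [hval] at this
    exact this
  -- pointwise identity for n ≥ 1
  have hmain : ∀ n : ℕ, 1 ≤ n →
      ((n.factorial : ℝ) * ((coeff n E1 : ℚ) : ℝ)) /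
          ((n : ℝ) ^ ((1 : ℝ) / 2) / Real.sqrt π * 2 ^ n * n.factorial) = g n := by
    intro n hn
    set Ee : ℝ := Real.exp 1 with hEdef
    have hx0 : (0:ℝ) < n := by exact_mod_cast hn
    have hr0 : (0:ℝ) < Real.sqrt n := Real.sqrt_pos.mpr hx0
    have hF : (0:ℝ) < n.factorial := by exact_mod_cast n.factorial_pos
    have hF2 : (0:ℝ) < (2*n).factorial := by exact_mod_cast (2*n).factorial_pos
    have hE : (0:ℝ) < Ee := Real.exp_pos 1
    have hsq : (s n)^2 = ((n.factorial:ℝ))^2 /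
        ((2*(n:ℝ)) * (((n:ℝ)/Ee)^n)^2) := by
      rw [hsdef, Stirling.stirlingSeq, div_pow, mul_pow, Real.sq_sqrt (by positivity)]
    have hs2n : s (2*n) = (((2*n).factorial:ℝ)) /
        ((2*Real.sqrt (n:ℝ)) * ((2*(n:ℝ)/Ee)^(2*n))) := by
      rw [hsdef, Stirling.stirlingSeq]
      push_cast
      rw [show (2*(2*(n:ℝ))) = 2^2*(n:ℝ) by ring,
        Real.sqrt_mul (by positivity) ((n:ℝ)), Real.sqrt_sq (by norm_num)]
    rw [coeff_E1 U E1 h0 hU hE1 n, if_neg (by omega : ¬ n = 0)]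
    rw [hgdef]
    simp only [aseq, bseq]
    rw [hsq, hs2n, ← Real.sqrt_eq_rpow]
    rw [show (2*n+1).factorial = (2*n+1) * (2*n).factorial from Nat.factorial_succ (2*n)]
    push_cast
    set r : ℝ := Real.sqrt (n:ℝ) with hrdef
    rw [show ((n:ℝ)) = r^2 by rw [hrdef, Real.sq_sqrt hx0.le]]
    have hsne : (s n)^2 ≠ 0 := by rw [hsq]; positivity
    field_simp
    ring
  constructor
  · refine hg.congr' ?_
    filter_upwards [eventually_ge_atTop 1] with n hn
    exact (hmain n hn).symm
  · -- second: ratio2 = ratio1 * (s n / √π)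
    have hratio2 : Tendsto (fun n : ℕ =>
        (((n.factorial : ℝ) * ((coeff n E1 : ℚ) : ℝ)) /
          ((n : ℝ) ^ ((1 : ℝ) / 2) / Real.sqrt π * 2 ^ n * n.factorial))
          * (s n / Real.sqrt π)) atTop (𝓝 (1 * (Real.sqrt π / Real.sqrt π))) := by
      refine Tendsto.mul ?_ (hs.div_const _)
      refine hg.congr' ?_
      filter_upwards [eventually_ge_atTop 1] with n hn
      exact (hmain n hn).symm
    rw [div_self hP.ne', mul_one] at hratio2
    refine hratio2.congr' ?_
    filter_upwards [eventually_ge_atTop 1] with n hn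
    set Ee : ℝ := Real.exp 1 with hEdef
    have hx0 : (0:ℝ) < n := by exact_mod_cast hn
    have hr0 : (0:ℝ) < Real.sqrt n := Real.sqrt_pos.mpr hx0
    have hF : (0:ℝ) < n.factorial := by exact_mod_cast n.factorial_pos
    have hE : (0:ℝ) < Ee := Real.exp_pos 1
    have hsn : s n = (n.factorial:ℝ) /
        (Real.sqrt 2 * Real.sqrt (n:ℝ) * (((n:ℝ)/Ee)^n)) := by
      rw [hsdef, Stirling.stirlingSeq, Real.sqrt_mul (by norm_num) ((n:ℝ))]
    have hsnpos : 0 < s n := by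
      rw [hsn]; positivity
    -- T1 = T2 * (s n / √π)
    have hT : ((n : ℝ) ^ ((1 : ℝ) / 2) / Real.sqrt π * 2 ^ n * (n.factorial:ℝ))
        = (Real.sqrt 2 * (n : ℝ) ^ (n + 1) * (2 / Ee) ^ n)
          * (s n / Real.sqrt π) := by
      rw [hsn, ← Real.sqrt_eq_rpow]
      set r : ℝ := Real.sqrt (n:ℝ) with hrdef
      rw [show ((n:ℝ)) = r^2 by rw [hrdef, Real.sq_sqrt hx0.le]]
      have h2 : (0:ℝ) < Real.sqrt 2 := by positivity
      field_simp
      ring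
    rw [hT]
    have hT2 : (Real.sqrt 2 * (n : ℝ) ^ (n + 1) * (2 / Ee) ^ n) ≠ 0 := by
      positivity
    field_simp

end GTaux
end

open PowerSeries Filter Real

/-- As `n → ∞`, `e_{n,1} = n!·[tⁿ]E1` satisfies `e_{n,1} ~ (n^(1/2)/√π)·2ⁿ·n!`
(equivalently `e_{n,1} ~ √2·n^(n+1)·(2/e)ⁿ`), in the sense that the ratio of the
two sides tends to 1.  Here `E1 = (1/2)·U³·(1-U)⁻³` and `U` is the unique series
with zero constant coefficient satisfying `U = t + U²/2`. -/
theorem stmt_4 (U E1 : PowerSeries ℚ) (h0 : constantCoeff U = 0)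
    (hU : U = PowerSeries.X + (1 / 2 : ℚ) • U ^ 2)
    (hE1 : E1 = (1 / 2 : ℚ) • (U ^ 3 * ((1 - U)⁻¹) ^ 3)) :
    Tendsto (fun n : ℕ =>
        ((n.factorial : ℝ) * ((coeff n E1 : ℚ) : ℝ)) /
          ((n : ℝ) ^ ((1 : ℝ) / 2) / Real.sqrt π * 2 ^ n * n.factorial))
      atTop (nhds 1) ∧
    Tendsto (fun n : ℕ =>
        ((n.factorial : ℝ) * ((coeff n E1 : ℚ) : ℝ)) /
          (Real.sqrt 2 * (n : ℝ) ^ (n + 1) * (2 / Real.exp 1) ^ n))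
      atTop (nhds 1) := by
  exact GTaux.main U E1 h0 hU hE1
end

section
/- The unique solution X ∈ ℚ[[t]] of the functional equation X = U·X + (1/2)·E1² + (E1/2)·(U·(1 − U)⁻¹)² + U²·E1·(1 − U)⁻³ is X = (1/2)·E1²·(1 − U)⁻¹ + (1/2)·E1·U²·(1 − U)⁻³ + E1·U²·(1 − U)⁻⁴; this X is the exponential generating function E2 of leaf-labeled time-consistent galled trees with exactly two galls. -/
open PowerSeries

/-- The unique solution `X ∈ ℚ[[t]]` of
`X = U·X + (1/2)·E1² + (E1/2)·(U·(1-U)⁻¹)² + U²·E1·(1-U)⁻³` is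
`X = (1/2)·E1²·(1-U)⁻¹ + (1/2)·E1·U²·(1-U)⁻³ + E1·U²·(1-U)⁻⁴`
(the EGF `E2` of leaf-labeled time-consistent galled trees with exactly two galls),
where `E1 = (1/2)·U³·(1-U)⁻³` and `U` is the unique series with zero constant
coefficient satisfying `U = t + U²/2`. -/
theorem stmt_5 (U E1 : PowerSeries ℚ) (h0 : constantCoeff U = 0)
    (hU : U = PowerSeries.X + (1 / 2 : ℚ) • U ^ 2)
    (hE1 : E1 = (1 / 2 : ℚ) • (U ^ 3 * ((1 - U)⁻¹) ^ 3)) :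
    ∀ X : PowerSeries ℚ,
      X = U * X + (1 / 2 : ℚ) • E1 ^ 2
          + ((1 / 2 : ℚ) • E1) * (U * (1 - U)⁻¹) ^ 2
          + U ^ 2 * E1 * ((1 - U)⁻¹) ^ 3 ↔
      X = (1 / 2 : ℚ) • (E1 ^ 2 * (1 - U)⁻¹)
          + (1 / 2 : ℚ) • (E1 * U ^ 2 * ((1 - U)⁻¹) ^ 3)
          + E1 * U ^ 2 * ((1 - U)⁻¹) ^ 4 := by
  intro X
  have hv : (1 - U) * (1 - U)⁻¹ = 1 := by
    apply PowerSeries.mul_inv_cancel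
    simp [h0]
  simp only [smul_eq_C_mul]
  constructor
  · intro h
    linear_combination (1 - U)⁻¹ * h - X * hv
  · intro h
    linear_combination (1 - U) * h + ((PowerSeries.C (1/2 : ℚ)) * E1 ^ 2
      + (PowerSeries.C (1/2 : ℚ)) * E1 * U ^ 2 * ((1 - U)⁻¹) ^ 2
      + E1 * U ^ 2 * ((1 - U)⁻¹) ^ 3) * hv
end

section
/- As n → ∞, the number e_{n,2} := n!·[tⁿ]E2 of leaf-labeled time-consistent galled trees with n leaves and exactly two galls satisfies the asymptotic equivalence e_{n,2} ~ (n^{5/2}/(3√π))·2ⁿ·n! (equivalently, e_{n,2} ~ (√2/3)·n^{n+3}·(2/e)ⁿ), in the sense that the ratio of the two sides tends to 1. -/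
open PowerSeries Filter Real Topology

noncomputable section

namespace GT2


/-- coefficients of `(1-2X)^{-7/2}` -/
def fq (m : ℕ) : ℚ :=
  (2*m+6).factorial / (15 * 2^(m+3) * (m+3).factorial * m.factorial)

/-- coefficients of `(1-2X)^{-3}` -/
def g3 (m : ℕ) : ℚ := 2^m * (m+1) * (m+2) / 2

lemma two_eq : (2 : PowerSeries ℚ) = C 2 := (map_ofNat C 2).symm

lemma fq_zero : fq 0 = 1 := by norm_num [fq, Nat.factorial]

lemma fq_rec (n : ℕ) : ((n : ℚ)+1) * fq (n+1) = (2*(n:ℚ)+7) * fq n := by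
  have h1 : 2*(n+1)+6 = (2*n+6)+1+1 := by omega
  have h2 : (n+1)+3 = (n+3)+1 := by omega
  unfold fq
  rw [h1, h2, Nat.factorial_succ, Nat.factorial_succ, Nat.factorial_succ (n+3),
    Nat.factorial_succ n, pow_succ]
  have e1 : ((n+3).factorial : ℚ) ≠ 0 := Nat.cast_ne_zero.2 (Nat.factorial_ne_zero _)
  have e2 : ((n).factorial : ℚ) ≠ 0 := Nat.cast_ne_zero.2 (Nat.factorial_ne_zero _)
  have e3 : (2:ℚ)^(n+3) ≠ 0 := by positivity
  push_cast
  field_simp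
  ring

lemma fq_eq (m : ℕ) :
    fq m = ((2*m+5)*(2*m+3)*(2*m+1) : ℚ) * m.centralBinom / (15 * 2^m) := by
  have hcb : ((m.centralBinom : ℚ)) * m.factorial * m.factorial = (2*m).factorial := by
    have := Nat.choose_mul_factorial_mul_factorial (show m ≤ 2*m by omega)
    rw [show 2*m - m = m by omega] at this
    exact_mod_cast congrArg (Nat.cast (R := ℚ)) this
  have hf6 : ((2*m+6).factorial : ℚ) =
      (2*m+6)*(2*m+5)*(2*m+4)*(2*m+3)*(2*m+2)*(2*m+1)*(2*m).factorial := by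
    rw [show 2*m+6 = (2*m)+1+1+1+1+1+1 by omega]
    simp only [Nat.factorial_succ]
    push_cast; ring
  have hf3 : ((m+3).factorial : ℚ) = (m+3)*(m+2)*(m+1)*m.factorial := by
    rw [show m+3 = m+1+1+1 by omega]
    simp only [Nat.factorial_succ]
    push_cast; ring
  have e1 : ((m+3).factorial : ℚ) ≠ 0 := Nat.cast_ne_zero.2 (Nat.factorial_ne_zero _)
  have e2 : ((m).factorial : ℚ) ≠ 0 := Nat.cast_ne_zero.2 (Nat.factorial_ne_zero _)
  have e3 : (2:ℚ)^(m+3) ≠ 0 := by positivity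
  have e4 : (2:ℚ)^m ≠ 0 := by positivity
  unfold fq
  rw [hf6, hf3, ← hcb]
  field_simp
  push_cast
  ring

/-- multiplication by `1 - 2X` characterized coefficientwise -/
lemma mul_lin (φ ψ : PowerSeries ℚ) (h0 : coeff 0 φ = coeff 0 ψ)
    (h : ∀ n, coeff (n+1) φ - 2 * coeff n φ = coeff (n+1) ψ) :
    φ * (1 - 2*X) = ψ := by
  have e : φ * (1 - 2*X) = φ - C 2 * (φ * X) := by rw [two_eq]; ring
  ext n
  rw [e, map_sub, coeff_C_mul]
  cases n with
  | zero =>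
    have : coeff 0 (φ * X) = 0 := by
      rw [coeff_zero_eq_constantCoeff, map_mul]
      simp
    rw [this, h0]; ring
  | succ k =>
    rw [coeff_succ_mul_X, ← h k]

def Fex : PowerSeries ℚ := PowerSeries.mk fq
def G1 : PowerSeries ℚ := PowerSeries.mk fun m => (2:ℚ)^m
def G2 : PowerSeries ℚ := PowerSeries.mk fun m => (2:ℚ)^m * ((m:ℚ)+1)
def G3 : PowerSeries ℚ := PowerSeries.mk g3

lemma hG1 : G1 * (1 - 2*X) = 1 := by
  apply mul_lin
  · simp [G1]
  · intro n
    simp [G1, coeff_one]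
    ring_nf

lemma hG2 : G2 * (1 - 2*X) = G1 := by
  apply mul_lin
  · simp [G1, G2]
  · intro n
    simp only [G1, G2, coeff_mk]
    push_cast; ring

lemma hG3a : G3 * (1 - 2*X) = G2 := by
  apply mul_lin
  · simp [G2, G3, g3]
  · intro n
    simp only [G2, G3, g3, coeff_mk]
    push_cast; ring

lemma hG3 : G3 * (1 - 2*X)^3 = 1 := by
  have : G3 * (1 - 2*X)^3 = ((G3 * (1-2*X)) * (1-2*X)) * (1-2*X) := by ring
  rw [this, hG3a, hG2, hG1]

/-- The coefficient recurrence coming from the ODE `(1-2X) y' = -y`. -/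
lemma ode_coeff {y : PowerSeries ℚ} (hy : (1 - 2*X) * d⁄dX ℚ y = -y) (n : ℕ) :
    ((n:ℚ)+1) * coeff (n+1) y = (2*(n:ℚ) - 1) * coeff n y := by
  have e : (1 - 2*X) * d⁄dX ℚ y = d⁄dX ℚ y - C 2 * (d⁄dX ℚ y * X) := by
    rw [two_eq]; ring
  rw [e] at hy
  have h := congrArg (coeff n) hy
  rw [map_sub, coeff_C_mul, map_neg] at h
  cases n with
  | zero =>
    have hz : coeff 0 (d⁄dX ℚ y * X) = 0 := by
      rw [coeff_zero_eq_constantCoeff, map_mul]; simp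
    rw [hz, coeff_derivative] at h
    push_cast
    push_cast at h
    linarith
  | succ k =>
    rw [coeff_succ_mul_X, coeff_derivative, coeff_derivative] at h
    push_cast
    push_cast at h
    linarith

lemma ode_unique {y z : PowerSeries ℚ} (hy : (1 - 2*X) * d⁄dX ℚ y = -y)
    (hz : (1 - 2*X) * d⁄dX ℚ z = -z) (h0 : coeff 0 y = coeff 0 z) : y = z := by
  ext n
  induction n with
  | zero => exact h0
  | succ k ih =>
    have h1 := ode_coeff hy k
    have h2 := ode_coeff hz k
    have hk : ((k:ℚ)+1) ≠ 0 := by positivity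
    rw [ih] at h1
    rw [← h2] at h1
    exact mul_left_cancel₀ hk h1

lemma hFode : (1 - 2*X) * d⁄dX ℚ Fex = 7 * Fex := by
  have e : (1 - 2*X) * d⁄dX ℚ Fex = d⁄dX ℚ Fex - C 2 * (d⁄dX ℚ Fex * X) := by
    rw [two_eq]; ring
  have e7 : (7 : PowerSeries ℚ) = C 7 := (map_ofNat C 7).symm
  rw [e, e7]
  ext n
  rw [map_sub, coeff_C_mul, coeff_C_mul]
  cases n with
  | zero =>
    have hz : coeff 0 (d⁄dX ℚ Fex * X) = 0 := by
      rw [coeff_zero_eq_constantCoeff, map_mul]; simp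
    rw [hz, coeff_derivative]
    simp only [Fex, coeff_mk]
    have h := fq_rec 0
    push_cast at h ⊢
    linarith
  | succ k =>
    rw [coeff_succ_mul_X, coeff_derivative, coeff_derivative]
    simp only [Fex, coeff_mk]
    have h1 := fq_rec (k+1)
    have h2 := fq_rec k
    push_cast at h1 h2 ⊢
    linarith [h1, h2]




lemma C_half : (2 : PowerSeries ℚ) * C (1/2) = 1 := by
  rw [two_eq, ← map_mul]; norm_num

lemma two_ne : (2 : PowerSeries ℚ) ≠ 0 := by
  intro h
  have := congrArg (constantCoeff) h
  simp [two_eq] at this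

lemma eight_ne : (8 : PowerSeries ℚ) ≠ 0 := by
  intro h
  have := congrArg (constantCoeff) h
  rw [show (8 : PowerSeries ℚ) = C 8 from (map_ofNat _ 8).symm] at this
  simp at this

lemma lin_ne : (1 - 2*X : PowerSeries ℚ) ≠ 0 := by
  intro h
  have := congrArg (constantCoeff) h
  simp [two_eq] at this

theorem coeffE2 (U E1 E2 : PowerSeries ℚ) (h0 : constantCoeff U = 0)
    (hU : U = PowerSeries.X + (1 / 2 : ℚ) • U ^ 2)
    (hE1 : E1 = (1 / 2 : ℚ) • (U ^ 3 * ((1 - U)⁻¹) ^ 3))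
    (hE2 : E2 = (1 / 2 : ℚ) • (E1 ^ 2 * (1 - U)⁻¹)
        + (1 / 2 : ℚ) • (E1 * U ^ 2 * ((1 - U)⁻¹) ^ 3)
        + E1 * U ^ 2 * ((1 - U)⁻¹) ^ 4) (n : ℕ) :
    coeff (n+3) E2 =
      8*fq (n+3) - 18*fq (n+2) + 6*fq (n+1) + fq n + 10*g3 (n+2) - 8*g3 (n+3) := by
  have hvne : constantCoeff (1-U) ≠ 0 := by simp [h0]
  have hv : (1-U) * (1-U)⁻¹ = 1 := PowerSeries.mul_inv_cancel _ hvne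
  have hUc := hU; rw [smul_eq_C_mul] at hUc
  have hE1c := hE1; rw [smul_eq_C_mul] at hE1c
  have hE2c := hE2; rw [smul_eq_C_mul, smul_eq_C_mul] at hE2c
  have hU' : (2 : PowerSeries ℚ) * U = 2*X + U^2 := by
    linear_combination (2 : PowerSeries ℚ) * hUc + U^2 * C_half
  have hs2 : (1-U)^2 = 1 - 2*X := by linear_combination -hU'
  have hE1' : (2 : PowerSeries ℚ) * E1 = U^3*((1-U)⁻¹)^3 := by
    linear_combination (2 : PowerSeries ℚ) * hE1c + (U^3*((1-U)⁻¹)^3) * C_half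
  have e1 : (2 : PowerSeries ℚ) * (E1 * (1-U)^3) = U^3 := by
    linear_combination (1-U)^3 * hE1' +
      U^3*(((1-U)*(1-U)⁻¹)^2 + (1-U)*(1-U)⁻¹ + 1) * hv
  have hE2' : (8 : PowerSeries ℚ) * E2 =
      4*(E1^2*(1-U)⁻¹) + 4*(E1*U^2*((1-U)⁻¹)^3) + 8*(E1*U^2*((1-U)⁻¹)^4) := by
    linear_combination (8 : PowerSeries ℚ) * hE2c +
      4*(E1^2*(1-U)⁻¹ + E1*U^2*((1-U)⁻¹)^3) * C_half
  have key0 : (8 : PowerSeries ℚ) * (E2 * (1-U)^8)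
      = U^6*(1-U) + 2*(U^5*(1-U)^2) + 4*(U^5*(1-U)) := by
    calc (8 : PowerSeries ℚ) * (E2 * (1-U)^8) = ((8 : PowerSeries ℚ)*E2) * (1-U)^8 := by
          ring
    _ = (4*(E1^2*(1-U)⁻¹) + 4*(E1*U^2*((1-U)⁻¹)^3) + 8*(E1*U^2*((1-U)⁻¹)^4)) * (1-U)^8 := by
          rw [hE2']
    _ = (2*(E1*(1-U)^3))^2 * ((1-U)*(1-U)⁻¹) * (1-U)
        + (2*(E1*(1-U)^3)) * (2*U^2) * ((1-U)*(1-U)⁻¹)^3 * (1-U)^2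
        + (2*(E1*(1-U)^3)) * (4*U^2) * ((1-U)*(1-U)⁻¹)^4 * (1-U) := by ring
    _ = U^6*(1-U) + 2*(U^5*(1-U)^2) + 4*(U^5*(1-U)) := by rw [e1, hv]; ring
  have key8 : (8 : PowerSeries ℚ) * (E2 * (1-2*X)^4)
      = 8*((1-2*X)*(10*X-8)) + 8*((8 - 18*X + 6*X^2 + X^3)*(1-U)) := by
    linear_combination key0 +
      ((U^5 - 5*U^4 - 2*U^3*X - 4*U^3 + 6*U^2*X - 8*U^2 + 4*U*X^2 + 20*U*X - 16*U
        - 4*X^2 + 56*X - 32)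
       - 8*E2*((1-U)^6 + (1-U)^4*(1-2*X) + (1-U)^2*(1-2*X)^2 + (1-2*X)^3)) * hs2
  -- derivative facts
  have hdlin : d⁄dX ℚ (1 - 2*X : PowerSeries ℚ) = -2 := by
    have e : (1 : PowerSeries ℚ) - 2*X = 1 - (X + X) := by ring
    rw [e, map_sub, map_add, derivative_X]
    simp
    ring
  have hD := congrArg (d⁄dX ℚ) hs2
  rw [hdlin, pow_two, Derivation.leibniz, smul_eq_mul] at hD
  have hsd : (1-U) * d⁄dX ℚ (1-U) = -1 := by
    apply mul_left_cancel₀ two_ne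
    linear_combination hD
  have hs_ode : (1-2*X) * d⁄dX ℚ (1-U) = -(1-U) := by
    linear_combination (-(d⁄dX ℚ (1-U)))*hs2 + (1-U)*hsd
  have hdpow : d⁄dX ℚ ((1-2*X : PowerSeries ℚ)^4) = -8*(1-2*X)^3 := by
    rw [Derivation.leibniz_pow, hdlin]
    norm_num
    ring
  have hVode : (1-2*X) * d⁄dX ℚ (Fex * (1-2*X)^4) = -(Fex * (1-2*X)^4) := by
    rw [Derivation.leibniz, smul_eq_mul, smul_eq_mul, hdpow]
    linear_combination (1-2*X)^4 * hFode
  have hFX : (1-U) = Fex * (1-2*X)^4 := by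
    apply ode_unique hs_ode hVode
    have hc : constantCoeff (Fex * (1-2*X)^4) = 1 := by
      rw [map_mul, map_pow]
      simp [Fex, fq_zero, two_eq]
    simp only [coeff_zero_eq_constantCoeff]
    rw [hc]
    simp [h0]
  have key2 : E2 = (8 - 18*X + 6*X^2 + X^3) * Fex + (10*X - 8) * G3 := by
    have h1 : ((8 : PowerSeries ℚ)*E2) * (1-2*X)^4
        = (8*((8 - 18*X + 6*X^2 + X^3) * Fex + (10*X - 8) * G3)) * (1-2*X)^4 := by
      calc ((8 : PowerSeries ℚ)*E2) * (1-2*X)^4 = 8*(E2*(1-2*X)^4) := by ring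
      _ = 8*((1-2*X)*(10*X-8)) + 8*((8 - 18*X + 6*X^2 + X^3)*(1-U)) := key8
      _ = 8*((1-2*X)*(10*X-8))*(G3 * (1-2*X)^3)
            + 8*((8 - 18*X + 6*X^2 + X^3)*(Fex * (1-2*X)^4)) := by
          rw [hG3, ← hFX]; ring
      _ = (8*((8 - 18*X + 6*X^2 + X^3) * Fex + (10*X - 8) * G3)) * (1-2*X)^4 := by ring
    have h2 := mul_right_cancel₀ (pow_ne_zero 4 lin_ne) h1
    exact mul_left_cancel₀ eight_ne h2
  -- coefficient extraction
  have c1 : coeff (n+3) (Fex * X) = fq (n+2) := by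
    rw [show n+3 = (n+2)+1 from rfl, coeff_succ_mul_X]; simp [Fex]
  have c2 : coeff (n+3) (Fex * X^2) = fq (n+1) := by
    rw [show n+3 = (n+1)+2 from rfl, coeff_mul_X_pow]; simp [Fex]
  have c3 : coeff (n+3) (Fex * X^3) = fq n := by
    rw [coeff_mul_X_pow]; simp [Fex]
  have c4 : coeff (n+3) (G3 * X) = g3 (n+2) := by
    rw [show n+3 = (n+2)+1 from rfl, coeff_succ_mul_X]; simp [G3]
  have hrw : (8 - 18*X + 6*X^2 + X^3) * Fex + (10*X - 8) * G3
      = C 8 * Fex - C 18 * (Fex * X) + C 6 * (Fex * X^2) + Fex * X^3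
        + C 10 * (G3 * X) - C 8 * G3 := by
    rw [show (8 : PowerSeries ℚ) = C 8 from (map_ofNat _ 8).symm,
        show (18 : PowerSeries ℚ) = C 18 from (map_ofNat _ 18).symm,
        show (6 : PowerSeries ℚ) = C 6 from (map_ofNat _ 6).symm,
        show (10 : PowerSeries ℚ) = C 10 from (map_ofNat _ 10).symm]
    ring
  rw [key2, hrw]
  simp only [map_add, map_sub, coeff_C_mul, c1, c2, c3, c4]
  simp only [Fex, G3, coeff_mk]




lemma sqrtpi_ne : Real.sqrt π ≠ 0 := Real.sqrt_ne_zero'.2 Real.pi_pos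

lemma cb_fac (n : ℕ) : ((n.centralBinom : ℝ)) * n.factorial * n.factorial
    = (2*n).factorial := by
  have h := Nat.choose_mul_factorial_mul_factorial (show n ≤ 2*n by omega)
  rw [show 2*n - n = n by omega] at h
  exact_mod_cast congrArg (Nat.cast (R := ℝ)) h

/-- `√n * centralBinom n / 4^n → 1/√π`. -/
lemma wlim : Tendsto (fun n : ℕ => Real.sqrt n * (n.centralBinom : ℝ) / 4^n)
    atTop (𝓝 (1 / Real.sqrt π)) := by
  have hst := Stirling.tendsto_stirlingSeq_sqrt_pi
  have h2n : Tendsto (fun n : ℕ => Stirling.stirlingSeq (2*n)) atTop (𝓝 (Real.sqrt π)) :=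
    hst.comp (tendsto_atTop_mono (fun n => by simp only [id_eq]; omega) tendsto_id)
  have hq : Tendsto (fun n : ℕ => Stirling.stirlingSeq (2*n) / (Stirling.stirlingSeq n)^2)
      atTop (𝓝 (Real.sqrt π / (Real.sqrt π)^2)) :=
    h2n.div (hst.pow 2) (pow_ne_zero 2 sqrtpi_ne)
  have hval : Real.sqrt π / (Real.sqrt π)^2 = 1 / Real.sqrt π := by
    rw [sq]
    field_simp
  rw [hval] at hq
  apply hq.congr'
  filter_upwards [eventually_ge_atTop 1] with n hn
  have hN : (1:ℝ) ≤ (n:ℝ) := by exact_mod_cast hn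
  have hN0 : (0:ℝ) < (n:ℝ) := by linarith
  have hsN : Real.sqrt n * Real.sqrt n = (n:ℝ) := Real.mul_self_sqrt hN0.le
  have hsN0 : (0:ℝ) < Real.sqrt n := Real.sqrt_pos.2 hN0
  have hfac : (0:ℝ) < n.factorial := by exact_mod_cast n.factorial_pos
  have hfac2 : (0:ℝ) < (2*n).factorial := by exact_mod_cast (2*n).factorial_pos
  have he : (0:ℝ) < Real.exp 1 := Real.exp_pos 1
  have hne : ((n:ℝ)/Real.exp 1)^n ≠ 0 := pow_ne_zero _ (by positivity)
  have hene : (Real.exp 1)^n ≠ 0 := pow_ne_zero _ (by positivity)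
  unfold Stirling.stirlingSeq
  have hc2n : ((2*n : ℕ):ℝ) = 2*(n:ℝ) := by push_cast; ring
  rw [hc2n]
  have hs4 : Real.sqrt (2*(2*(n:ℝ))) = 2 * Real.sqrt n := by
    rw [show 2*(2*(n:ℝ)) = 4*(n:ℝ) by ring, show (4:ℝ) = 2^2 by norm_num,
       Real.sqrt_mul (by positivity), Real.sqrt_sq (by norm_num)]
  rw [hs4]
  have hpow : (2*(n:ℝ)/Real.exp 1)^(2*n) = 4^n * ((n:ℝ)/Real.exp 1)^(2*n) := by
    rw [show 2*(n:ℝ)/Real.exp 1 = 2 * ((n:ℝ)/Real.exp 1) by ring, mul_pow,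
      show (2:ℝ)^(2*n) = 4^n by rw [pow_mul]; norm_num]
  rw [hpow]
  have hcb := cb_fac n
  have hpp : ((n:ℝ)/Real.exp 1)^(2*n) = ((n:ℝ)/Real.exp 1)^n * ((n:ℝ)/Real.exp 1)^n := by
    rw [← pow_add]; ring_nf
  rw [hpp, ← hcb]
  have h4 : (4:ℝ)^n ≠ 0 := by positivity
  field_simp
  rw [Real.sq_sqrt (by positivity), Real.sq_sqrt hN0.le]
  ring



lemma hu3 : Tendsto (fun n : ℕ => 1/((n:ℝ)+3)) atTop (𝓝 0) := by
  have h := (tendsto_add_atTop_iff_nat (f := fun n : ℕ => 1 / (n:ℝ)) 3).2 tendsto_one_div_atTop_nhds_zero_nat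
  apply h.congr
  intro n; push_cast; ring

lemma hsqrt3 : Tendsto (fun n : ℕ => 1/Real.sqrt ((n:ℝ)+3)) atTop (𝓝 0) := by
  have h1 : Tendsto (fun n : ℕ => ((n:ℝ)+3)) atTop atTop :=
    tendsto_atTop_add_const_right _ 3 tendsto_natCast_atTop_atTop
  have h2 : Tendsto (fun n : ℕ => Real.sqrt ((n:ℝ)+3)) atTop atTop := by
    apply ((tendsto_rpow_atTop (by norm_num : (0:ℝ) < 1/2)).comp h1).congr
    intro n
    simp only [Function.comp_apply]
    exact (Real.sqrt_eq_rpow _).symm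
  have := h2.inv_tendsto_atTop
  apply this.congr
  intro n
  simp [one_div]

/-- The key exact identity for the shifted ratio. -/
lemma master (n : ℕ) (c : ℚ)
    (hc : c = 8*fq (n+3) - 18*fq (n+2) + 6*fq (n+1) + fq n + 10*g3 (n+2) - 8*g3 (n+3)) :
    ((n+3).factorial : ℝ) * ((c : ℚ) : ℝ) /
      (((n+3 : ℕ) : ℝ) ^ ((5:ℝ)/2) / (3 * Real.sqrt π) * 2^(n+3) * ((n+3).factorial : ℝ))
    = (Real.sqrt π/5) * (Real.sqrt ((n:ℝ)+3) * (((n+3).centralBinom : ℕ) : ℝ) / 4^(n+3))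
        * ((5*((n:ℝ)+3)^3+135*((n:ℝ)+3)^2+310*((n:ℝ)+3)+120) / ((n:ℝ)+3)^3)
      + (3*Real.sqrt π/2) * ((((n:ℝ)+3)+1) * (-3*((n:ℝ)+3)-16) / ((((n:ℝ)+3))^2 * Real.sqrt ((n:ℝ)+3))) := by
  -- Step 1: closed form for c over ℚ
  have r2 := fq_rec (n+2)
  have r1 := fq_rec (n+1)
  have r0 := fq_rec n
  push_cast at r2 r1 r0
  have h5 : (2*((n:ℚ)+3)+5) ≠ 0 := by positivity
  have h3 : (2*((n:ℚ)+3)+3) ≠ 0 := by positivity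
  have h1 : (2*((n:ℚ)+3)+1) ≠ 0 := by positivity
  have e2 : fq (n+2) = ((n:ℚ)+3) * fq (n+3) / (2*((n:ℚ)+3)+5) := by
    field_simp
    linear_combination -r2
  have e1 : fq (n+1) = ((n:ℚ)+3)*((n:ℚ)+2) * fq (n+3) / ((2*((n:ℚ)+3)+5)*(2*((n:ℚ)+3)+3)) := by
    rw [e2] at r1
    field_simp at r1 ⊢
    linear_combination -r1
  have e0 : fq n = ((n:ℚ)+3)*((n:ℚ)+2)*((n:ℚ)+1) * fq (n+3)
      / ((2*((n:ℚ)+3)+5)*(2*((n:ℚ)+3)+3)*(2*((n:ℚ)+3)+1)) := by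
    rw [e1] at r0
    field_simp at r0 ⊢
    linear_combination -r0
  have hfq3 : fq (n+3) = ((2*((n:ℚ)+3)+5)*(2*((n:ℚ)+3)+3)*(2*((n:ℚ)+3)+1))
      * ((n+3).centralBinom : ℚ) / (15 * 2^(n+3)) := by
    have h := fq_eq (n+3)
    push_cast at h
    convert h using 3 <;> push_cast <;> ring
  have hc2 : c = ((n+3).centralBinom : ℚ)
        * (5*((n:ℚ)+3)^3+135*((n:ℚ)+3)^2+310*((n:ℚ)+3)+120) / (15 * 2^(n+3))
      + 2^(n+2) * ((((n:ℚ)+3)+1) * (-3*((n:ℚ)+3)-16)) := by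
    rw [hc, e2, e1, e0, hfq3]
    simp only [g3]
    push_cast
    have hp2 : (2:ℚ)^(n+3) ≠ 0 := by positivity
    have hp22 : (2:ℚ)^(n+2) ≠ 0 := by positivity
    rw [pow_succ 2 (n+2)]
    field_simp
    ring
  -- Step 2: real algebra
  have hcR := congrArg (fun q : ℚ => (q : ℝ)) hc2
  push_cast at hcR
  have hx : ((n+3 : ℕ) : ℝ) = (n:ℝ)+3 := by push_cast; ring
  have hxpos : (0:ℝ) < (n:ℝ)+3 := by positivity
  have hx52 : ((n:ℝ)+3) ^ ((5:ℝ)/2) = ((n:ℝ)+3)^2 * Real.sqrt ((n:ℝ)+3) := by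
    rw [show (5:ℝ)/2 = ((2:ℕ):ℝ) + 1/2 by norm_num, Real.rpow_add hxpos,
      Real.rpow_natCast, ← Real.sqrt_eq_rpow]
  have hS : Real.sqrt ((n:ℝ)+3) * Real.sqrt ((n:ℝ)+3) = (n:ℝ)+3 :=
    Real.mul_self_sqrt hxpos.le
  have hSne : Real.sqrt ((n:ℝ)+3) ≠ 0 := Real.sqrt_ne_zero'.2 hxpos
  have hfacne : (((n+3).factorial : ℕ) : ℝ) ≠ 0 :=
    Nat.cast_ne_zero.2 (Nat.factorial_ne_zero _)
  have h2ne : (2:ℝ)^(n+3) ≠ 0 := by positivity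
  have h44 : (4:ℝ)^(n+3) = 2^(n+3) * 2^(n+3) := by
    rw [show (4:ℝ) = 2*2 by norm_num, mul_pow]
  rw [hx, hx52, hcR, h44, pow_succ 2 (n+2)]
  have hxne : ((n:ℝ)+3) ≠ 0 := ne_of_gt hxpos
  have hS3 : Real.sqrt (3 + (n:ℝ)) ^ 3 = (3 + (n:ℝ)) * Real.sqrt (3 + (n:ℝ)) := by
    have h : Real.sqrt (3 + (n:ℝ)) * Real.sqrt (3 + (n:ℝ)) = 3 + (n:ℝ) :=
      Real.mul_self_sqrt (by positivity)
    calc Real.sqrt (3 + (n:ℝ))^3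
        = (Real.sqrt (3+(n:ℝ))*Real.sqrt (3+(n:ℝ)))*Real.sqrt (3+(n:ℝ)) := by ring
      _ = _ := by rw [h]
  field_simp
  ring_nf
  rw [Real.sq_sqrt (by positivity)]
  ring

/-- the limit of the master right-hand side -/
lemma limit_master_aux (E : ℕ → ℝ)
    (hE : ∀ n, E n
      = (Real.sqrt π/5) * (Real.sqrt ((n:ℝ)+3) * (((n+3).centralBinom : ℕ) : ℝ) / 4^(n+3))
        * ((5*((n:ℝ)+3)^3+135*((n:ℝ)+3)^2+310*((n:ℝ)+3)+120) / ((n:ℝ)+3)^3)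
      + (3*Real.sqrt π/2) * ((((n:ℝ)+3)+1) * (-3*((n:ℝ)+3)-16) / ((((n:ℝ)+3))^2 * Real.sqrt ((n:ℝ)+3)))) :
    Tendsto E atTop (𝓝 1) := by
  have w3 : Tendsto (fun n : ℕ => Real.sqrt ((n:ℝ)+3) * (((n+3).centralBinom : ℕ) : ℝ) / 4^(n+3))
      atTop (𝓝 (1/Real.sqrt π)) := by
    have h := (tendsto_add_atTop_iff_nat 3).2 wlim
    apply h.congr
    intro n
    have hx : ((n+3 : ℕ) : ℝ) = (n:ℝ)+3 := by push_cast; ring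
    rw [hx]
  have p5 : Tendsto (fun n : ℕ =>
      (5*((n:ℝ)+3)^3+135*((n:ℝ)+3)^2+310*((n:ℝ)+3)+120) / ((n:ℝ)+3)^3)
      atTop (𝓝 5) := by
    have l : Tendsto (fun n : ℕ => 5 + 135*(1/((n:ℝ)+3)) + 310*((1/((n:ℝ)+3))*(1/((n:ℝ)+3)))
        + 120*((1/((n:ℝ)+3))*((1/((n:ℝ)+3))*(1/((n:ℝ)+3)))))
        atTop (𝓝 (5 + 135*0 + 310*(0*0) + 120*(0*(0*0)))) := by
      exact ((tendsto_const_nhds.add (hu3.const_mul 135)).add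
        ((hu3.mul hu3).const_mul 310)).add ((hu3.mul (hu3.mul hu3)).const_mul 120)
    norm_num at l
    apply l.congr
    intro n
    have hxne : ((n:ℝ)+3) ≠ 0 := by positivity
    field_simp
  have tail : Tendsto (fun n : ℕ =>
      (3*Real.sqrt π/2) * ((((n:ℝ)+3)+1) * (-3*((n:ℝ)+3)-16) / ((((n:ℝ)+3))^2 * Real.sqrt ((n:ℝ)+3))))
      atTop (𝓝 0) := by
    have br : Tendsto (fun n : ℕ => (3*Real.sqrt π/2) *
        (-3 - 19*(1/((n:ℝ)+3)) - 16*((1/((n:ℝ)+3))*(1/((n:ℝ)+3)))))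
        atTop (𝓝 ((3*Real.sqrt π/2) * (-3 - 19*0 - 16*(0*0)))) := by
      exact ((tendsto_const_nhds.sub (hu3.const_mul 19)).sub
        ((hu3.mul hu3).const_mul 16)).const_mul _
    have l := br.mul hsqrt3
    rw [mul_zero] at l
    apply l.congr
    intro n
    have hxpos : (0:ℝ) < (n:ℝ)+3 := by positivity
    have hxne : ((n:ℝ)+3) ≠ 0 := ne_of_gt hxpos
    have hSne : Real.sqrt ((n:ℝ)+3) ≠ 0 := Real.sqrt_ne_zero'.2 hxpos
    field_simp
    ring
  have total := (((tendsto_const_nhds :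
      Tendsto (fun _ : ℕ => Real.sqrt π/5) atTop (𝓝 (Real.sqrt π/5))).mul w3).mul p5).add tail
  have hval : (Real.sqrt π/5) * (1/Real.sqrt π) * 5 + 0 = 1 := by
    field_simp
    ring
  rw [hval] at total
  apply total.congr
  intro n
  rw [hE n]





lemma stolim : Tendsto (fun n : ℕ => Stirling.stirlingSeq n / Real.sqrt π) atTop (𝓝 1) := by
  have h := Stirling.tendsto_stirlingSeq_sqrt_pi.div_const (Real.sqrt π)
  rwa [div_self sqrtpi_ne] at h

lemma ratio12 (n : ℕ) (hn : 1 ≤ n) (A : ℝ) :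
    A / ((n:ℝ)^((5:ℝ)/2)/(3*Real.sqrt π)*2^n*(n.factorial:ℝ))
      * (Stirling.stirlingSeq n / Real.sqrt π)
    = A / (Real.sqrt 2/3*(n:ℝ)^(n+3)*(2/Real.exp 1)^n) := by
  have hN : (0:ℝ) < (n:ℝ) := by exact_mod_cast Nat.cast_pos.2 hn
  have hs2 : Real.sqrt 2 * Real.sqrt 2 = 2 := Real.mul_self_sqrt (by norm_num)
  have hsN : Real.sqrt (n:ℝ) * Real.sqrt (n:ℝ) = (n:ℝ) := Real.mul_self_sqrt hN.le
  have hsNne : Real.sqrt (n:ℝ) ≠ 0 := Real.sqrt_ne_zero'.2 hN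
  have hs2ne : Real.sqrt 2 ≠ 0 := by positivity
  have he : (0:ℝ) < Real.exp 1 := Real.exp_pos 1
  have hene : (Real.exp 1)^n ≠ 0 := by positivity
  have hNn : ((n:ℝ))^n ≠ 0 := by positivity
  have hfac : ((n.factorial : ℕ):ℝ) ≠ 0 := Nat.cast_ne_zero.2 (Nat.factorial_ne_zero _)
  have h2n : (2:ℝ)^n ≠ 0 := by positivity
  have hx52 : ((n:ℝ)) ^ ((5:ℝ)/2) = ((n:ℝ))^2 * Real.sqrt (n:ℝ) := by
    rw [show (5:ℝ)/2 = ((2:ℕ):ℝ) + 1/2 by norm_num, Real.rpow_add hN,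
      Real.rpow_natCast, ← Real.sqrt_eq_rpow]
  unfold Stirling.stirlingSeq
  rw [hx52, Real.sqrt_mul (by norm_num : (0:ℝ) ≤ 2) (n:ℝ), div_pow, div_pow,
    pow_add]
  field_simp
  ring_nf
  rw [Real.sq_sqrt hN.le]


end GT2

end

open PowerSeries Filter Real

/-- As `n → ∞`, `e_{n,2} = n!·[tⁿ]E2` satisfies `e_{n,2} ~ (n^(5/2)/(3√π))·2ⁿ·n!`
(equivalently `e_{n,2} ~ (√2/3)·n^(n+3)·(2/e)ⁿ`), in the sense that the ratio of
the two sides tends to 1.  Here `U` is the unique series with zero constant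
coefficient satisfying `U = t + U²/2`, `E1 = (1/2)·U³·(1-U)⁻³`, and
`E2 = (1/2)·E1²·(1-U)⁻¹ + (1/2)·E1·U²·(1-U)⁻³ + E1·U²·(1-U)⁻⁴`. -/
theorem stmt_6 (U E1 E2 : PowerSeries ℚ) (h0 : constantCoeff U = 0)
    (hU : U = PowerSeries.X + (1 / 2 : ℚ) • U ^ 2)
    (hE1 : E1 = (1 / 2 : ℚ) • (U ^ 3 * ((1 - U)⁻¹) ^ 3))
    (hE2 : E2 = (1 / 2 : ℚ) • (E1 ^ 2 * (1 - U)⁻¹)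
        + (1 / 2 : ℚ) • (E1 * U ^ 2 * ((1 - U)⁻¹) ^ 3)
        + E1 * U ^ 2 * ((1 - U)⁻¹) ^ 4) :
    Tendsto (fun n : ℕ =>
        ((n.factorial : ℝ) * ((coeff n E2 : ℚ) : ℝ)) /
          ((n : ℝ) ^ ((5 : ℝ) / 2) / (3 * Real.sqrt π) * 2 ^ n * n.factorial))
      atTop (nhds 1) ∧
    Tendsto (fun n : ℕ =>
        ((n.factorial : ℝ) * ((coeff n E2 : ℚ) : ℝ)) /
          (Real.sqrt 2 / 3 * (n : ℝ) ^ (n + 3) * (2 / Real.exp 1) ^ n))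
      atTop (nhds 1) := by
  have key1 : Filter.Tendsto (fun n : ℕ =>
      ((n.factorial : ℝ) * ((coeff n E2 : ℚ) : ℝ)) /
        ((n : ℝ) ^ ((5 : ℝ) / 2) / (3 * Real.sqrt π) * 2 ^ n * n.factorial))
      Filter.atTop (nhds 1) := by
    rw [← Filter.tendsto_add_atTop_iff_nat 3]
    exact GT2.limit_master_aux _
      (fun n => GT2.master n _ (GT2.coeffE2 U E1 E2 h0 hU hE1 hE2 n))
  refine ⟨key1, ?_⟩
  have hmul := key1.mul GT2.stolim
  rw [mul_one] at hmul
  apply hmul.congr'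
  filter_upwards [Filter.eventually_ge_atTop 1] with n hn
  exact GT2.ratio12 n hn _
end

section
/- There exists a unique formal power series A in ℚ[[t]] with constant coefficient 0 satisfying A = t + A²/2 + (A/2)·(A·(1 − A)⁻¹)²; equivalently, A is the unique series with constant coefficient 0 satisfying the polynomial identity 2·A·(1 − A)² = 2·t·(1 − A)² + A²·(1 − A)² + A³. -/
open PowerSeries

namespace Stmt7Aux

lemma mem_smul_top_iff (n : ℕ) (x : PowerSeries ℚ) :
    x ∈ ((Ideal.span {(PowerSeries.X : PowerSeries ℚ)}) ^ n • ⊤ : Ideal (PowerSeries ℚ)) ↔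
      ∀ i < n, coeff (R := ℚ) i x = 0 := by
  rw [← Ideal.one_eq_top, Ideal.smul_eq_mul, mul_one, Ideal.span_singleton_pow,
    Ideal.mem_span_singleton]
  exact PowerSeries.X_pow_dvd_iff

instance : IsAdicComplete (Ideal.span {(PowerSeries.X : PowerSeries ℚ)}) (PowerSeries ℚ) where
  haus' x h := by
    ext i
    have := SModEq.zero.mp (h (i + 1))
    simpa using (mem_smul_top_iff (i + 1) x).mp this i (Nat.lt_succ_self i)
  prec' f hf := by
    refine ⟨PowerSeries.mk fun i => coeff (R := ℚ) i (f (i + 1)), fun n => ?_⟩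
    rw [SModEq.sub_mem]
    rw [mem_smul_top_iff]
    intro i hi
    have h1 := SModEq.sub_mem.mp (hf (show i + 1 ≤ n from hi))
    have h2 := (mem_smul_top_iff (i + 1) _).mp h1 i (Nat.lt_succ_self i)
    rw [map_sub] at h2 ⊢
    rw [coeff_mk]
    rw [sub_eq_zero] at h2 ⊢
    exact h2.symm

lemma exists_poly : ∃ A : PowerSeries ℚ, constantCoeff (R := ℚ) A = 0 ∧
    2 * A * (1 - A) ^ 2
      = 2 * PowerSeries.X * (1 - A) ^ 2 + A ^ 2 * (1 - A) ^ 2 + A ^ 3 := by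
  classical
  set I : Ideal (PowerSeries ℚ) := Ideal.span {PowerSeries.X} with hI
  let f : Polynomial (PowerSeries ℚ) :=
    Polynomial.X ^ 4 - 3 * Polynomial.X ^ 3
      + Polynomial.C (5 + 2 * PowerSeries.X) * Polynomial.X ^ 2
      - Polynomial.C (2 + 4 * PowerSeries.X) * Polynomial.X
      + Polynomial.C (2 * PowerSeries.X)
  have hmonic : f.Monic := by
    simp only [f]
    monicity!
  have h1 : f.eval 0 ∈ I := by
    have : f.eval 0 = 2 * PowerSeries.X := by simp [f]
    rw [this, hI, Ideal.mem_span_singleton]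
    exact ⟨2, mul_comm _ _⟩
  have h2 : IsUnit (Ideal.Quotient.mk I (f.derivative.eval 0)) := by
    have hd : f.derivative.eval 0 = -(2 + 4 * PowerSeries.X) := by
      simp [f]
    have hunit : IsUnit (-((2 : PowerSeries ℚ) + 4 * PowerSeries.X)) := by
      rw [PowerSeries.isUnit_iff_constantCoeff]
      simp [map_ofNat]
    rw [hd]
    exact hunit.map _
  obtain ⟨a, hroot, ha⟩ := HenselianRing.is_henselian (I := I) f hmonic 0 h1 h2
  have ha0 : constantCoeff (R := ℚ) a = 0 := by
    rw [sub_zero, hI, Ideal.mem_span_singleton] at ha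
    exact PowerSeries.X_dvd_iff.mp ha
  refine ⟨a, ha0, ?_⟩
  have he : a ^ 4 - 3 * a ^ 3 + (5 + 2 * PowerSeries.X) * a ^ 2
      - (2 + 4 * PowerSeries.X) * a + 2 * PowerSeries.X = 0 := by
    have := hroot
    simpa [f, Polynomial.IsRoot] using this
  linear_combination -he

lemma unique_poly (A B : PowerSeries ℚ) (hA0 : constantCoeff (R := ℚ) A = 0)
    (hB0 : constantCoeff (R := ℚ) B = 0)
    (hA : 2 * A * (1 - A) ^ 2
      = 2 * PowerSeries.X * (1 - A) ^ 2 + A ^ 2 * (1 - A) ^ 2 + A ^ 3)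
    (hB : 2 * B * (1 - B) ^ 2
      = 2 * PowerSeries.X * (1 - B) ^ 2 + B ^ 2 * (1 - B) ^ 2 + B ^ 3) :
    A = B := by
  set Q : PowerSeries ℚ := (2 + 4 * PowerSeries.X) - (5 + 2 * PowerSeries.X) * (A + B)
      + 3 * (A ^ 2 + A * B + B ^ 2) - (A ^ 3 + A ^ 2 * B + A * B ^ 2 + B ^ 3) with hQdef
  have hQ : (A - B) * Q = 0 := by
    rw [hQdef]
    linear_combination hA - hB
  have hQ0 : constantCoeff (R := ℚ) Q ≠ 0 := by
    rw [hQdef]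
    simp [hA0, hB0, map_ofNat]
  rcases mul_eq_zero.mp hQ with h | h
  · exact sub_eq_zero.mp h
  · exact absurd (by rw [h]; simp) hQ0

lemma equiv_lemma (A : PowerSeries ℚ) (h0 : constantCoeff (R := ℚ) A = 0) :
    (A = PowerSeries.X + (1 / 2 : ℚ) • A ^ 2
        + ((1 / 2 : ℚ) • A) * (A * (1 - A)⁻¹) ^ 2 ↔
      2 * A * (1 - A) ^ 2
        = 2 * PowerSeries.X * (1 - A) ^ 2 + A ^ 2 * (1 - A) ^ 2 + A ^ 3) := by
  have hc : constantCoeff (R := ℚ) (1 - A) ≠ 0 := by simp [h0]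
  have hu : (1 - A) * (1 - A)⁻¹ = 1 := PowerSeries.mul_inv_cancel _ hc
  have hhalf : (2 : PowerSeries ℚ) * PowerSeries.C (R := ℚ) (1 / 2) = 1 := by
    have h2 : (2 : PowerSeries ℚ) = PowerSeries.C (R := ℚ) 2 := by simp [map_ofNat]
    rw [h2, ← map_mul]
    norm_num
  rw [PowerSeries.smul_eq_C_mul, PowerSeries.smul_eq_C_mul]
  constructor
  · intro h
    linear_combination (2 * (1 - A) ^ 2) * h + (A ^ 3 * ((1 - A) * (1 - A)⁻¹ + 1)) * hu
      + (A ^ 2 * (1 - A) ^ 2 + A ^ 3 * (1 - A)⁻¹ ^ 2 * (1 - A) ^ 2) * hhalf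
  · intro h
    have h2 : (2 : PowerSeries ℚ) ≠ 0 := by
      intro hcon
      have := congrArg (constantCoeff (R := ℚ)) hcon
      simp [map_ofNat] at this
    apply mul_left_cancel₀ h2
    linear_combination ((1 - A)⁻¹ ^ 2) * h
      - ((1 - A) * (1 - A)⁻¹ + 1) * (2 * A - 2 * PowerSeries.X - A ^ 2) * hu
      - (A ^ 2 + A ^ 3 * (1 - A)⁻¹ ^ 2) * hhalf

end Stmt7Aux

/-- There exists a unique formal power series `A ∈ ℚ[[t]]` with constant coefficient `0`
satisfying `A = t + A²/2 + (A/2)·(A·(1-A)⁻¹)²`; moreover, for series `A` with constant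
coefficient `0`, this functional equation is equivalent to the polynomial identity
`2·A·(1-A)² = 2·t·(1-A)² + A²·(1-A)² + A³`. -/
theorem stmt_7 :
    (∃! A : PowerSeries ℚ, constantCoeff (R := ℚ) A = 0 ∧
      A = PowerSeries.X + (1 / 2 : ℚ) • A ^ 2
          + ((1 / 2 : ℚ) • A) * (A * (1 - A)⁻¹) ^ 2) ∧
    (∀ A : PowerSeries ℚ, constantCoeff (R := ℚ) A = 0 →
      (A = PowerSeries.X + (1 / 2 : ℚ) • A ^ 2
          + ((1 / 2 : ℚ) • A) * (A * (1 - A)⁻¹) ^ 2 ↔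
        2 * A * (1 - A) ^ 2
          = 2 * PowerSeries.X * (1 - A) ^ 2 + A ^ 2 * (1 - A) ^ 2 + A ^ 3)) := by
  obtain ⟨A, hA0, hApoly⟩ := Stmt7Aux.exists_poly
  refine ⟨⟨A, ⟨hA0, (Stmt7Aux.equiv_lemma A hA0).mpr hApoly⟩, ?_⟩,
    fun B h0 => Stmt7Aux.equiv_lemma B h0⟩
  rintro B ⟨hB0, hBeq⟩
  exact Stmt7Aux.unique_poly B A hB0 hA0 ((Stmt7Aux.equiv_lemma B hB0).mp hBeq) hApoly
end

section
/- For every n ≥ 0, the coefficient of tⁿu¹ in G equals the coefficient of tⁿ in E1 := (1/2)·U³·(1 − U)⁻³; that is, extracting the coefficient of u¹ from the bivariate generating function G of leaf-labeled time-consistent galled trees yields the exponential generating function of those with exactly one gall. -/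
namespace GalledAux

noncomputable section

open Finset

/-- exponent vector `t^n u^m` -/
def e (n m : ℕ) : Fin 2 →₀ ℕ := Finsupp.single 0 n + Finsupp.single 1 m

lemma e_apply0 (n m : ℕ) : e n m 0 = n := by
  simp [e, Finsupp.single_apply]

lemma e_apply1 (n m : ℕ) : e n m 1 = m := by
  simp [e, Finsupp.single_apply]

lemma e_eq_self (d : Fin 2 →₀ ℕ) : e (d 0) (d 1) = d := by
  ext i
  fin_cases i
  · simpa using e_apply0 (d 0) (d 1)
  · simpa using e_apply1 (d 0) (d 1)

lemma e_add (n m n' m' : ℕ) : e n m + e n' m' = e (n + n') (m + m') := by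
  ext i
  fin_cases i
  · simpa using (by rw [e_apply0, e_apply0, e_apply0] : (e n m) 0 + (e n' m') 0 = (e (n+n') (m+m')) 0).symm ▸ rfl
  · simp [e_apply1]

lemma coeff_e_mul (F H : MvPowerSeries (Fin 2) ℚ) (n m : ℕ) :
    MvPowerSeries.coeff (e n m) (F * H) =
      ∑ p ∈ Finset.HasAntidiagonal.antidiagonal n ×ˢ Finset.HasAntidiagonal.antidiagonal m,
        MvPowerSeries.coeff (e p.1.1 p.2.1) F * MvPowerSeries.coeff (e p.1.2 p.2.2) H := by
  rw [MvPowerSeries.coeff_mul]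
  apply Finset.sum_nbij' (fun p => ((p.1 0, p.2 0), (p.1 1, p.2 1)))
    (fun x => (e x.1.1 x.2.1, e x.1.2 x.2.2))
  · intro p hp
    rw [Finset.HasAntidiagonal.mem_antidiagonal] at hp
    simp only [Finset.mem_product, Finset.HasAntidiagonal.mem_antidiagonal]
    constructor
    · have := congrArg (fun f => f 0) hp
      simpa [e_apply0] using this
    · have := congrArg (fun f => f 1) hp
      simpa [e_apply1] using this
  · intro x hx
    simp only [Finset.mem_product, Finset.HasAntidiagonal.mem_antidiagonal] at hx
    rw [Finset.HasAntidiagonal.mem_antidiagonal, e_add, hx.1, hx.2]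
  · intro p hp
    simp [e_eq_self]
  · intro x hx
    simp [e_apply0, e_apply1]
  · intro p hp
    simp [e_eq_self]



def A (F : MvPowerSeries (Fin 2) ℚ) : PowerSeries ℚ :=
  PowerSeries.mk fun n => MvPowerSeries.coeff (e n 0) F

def B (F : MvPowerSeries (Fin 2) ℚ) : PowerSeries ℚ :=
  PowerSeries.mk fun n => MvPowerSeries.coeff (e n 1) F

lemma coeff_A (F : MvPowerSeries (Fin 2) ℚ) (n : ℕ) :
    PowerSeries.coeff n (A F) = MvPowerSeries.coeff (e n 0) F := PowerSeries.coeff_mk _ _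
lemma coeff_B (F : MvPowerSeries (Fin 2) ℚ) (n : ℕ) :
    PowerSeries.coeff n (B F) = MvPowerSeries.coeff (e n 1) F := PowerSeries.coeff_mk _ _

lemma A_add (F H) : A (F + H) = A F + A H := by
  ext n; simp [coeff_A]
lemma B_add (F H) : B (F + H) = B F + B H := by
  ext n; simp [coeff_B]
lemma A_smul (c : ℚ) (F) : A (c • F) = c • A F := by
  ext n; simp [coeff_A]
lemma B_smul (c : ℚ) (F) : B (c • F) = c • B F := by
  ext n; simp [coeff_B]
lemma A_one : A 1 = 1 := by
  ext n
  simp only [coeff_A, MvPowerSeries.coeff_one, PowerSeries.coeff_one]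
  by_cases h : n = 0
  · subst h; simp [e]
  · rw [if_neg, if_neg h]
    intro hc
    exact h (by simpa [e_apply0] using congrArg (fun f => f 0) hc)
lemma B_one : B 1 = 0 := by
  ext n
  simp only [coeff_B, MvPowerSeries.coeff_one, map_zero]
  rw [if_neg]
  intro hc
  simpa [e_apply1] using congrArg (fun f => f 1) hc

lemma A_mul (F H) : A (F * H) = A F * A H := by
  ext n
  rw [coeff_A, PowerSeries.coeff_mul, coeff_e_mul]
  rw [show Finset.HasAntidiagonal.antidiagonal (0:ℕ) = {(0,0)} from rfl]
  rw [Finset.sum_product_right]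
  simp [coeff_A]

lemma antidiag_one : Finset.HasAntidiagonal.antidiagonal (1:ℕ) = {(0,1),(1,0)} := rfl

lemma B_mul (F H) : B (F * H) = A F * B H + B F * A H := by
  ext n
  rw [coeff_B, coeff_e_mul, antidiag_one]
  rw [Finset.sum_product_right]
  rw [show ({(0,1),(1,0)} : Finset (ℕ × ℕ)) = insert (0,1) {(1,0)} from rfl]
  rw [Finset.sum_insert (by decide), Finset.sum_singleton]
  simp only [map_add, PowerSeries.coeff_mul]
  congr 1 <;> (apply Finset.sum_congr rfl; intro p hp; simp [coeff_A, coeff_B])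

lemma A_X0 : A (MvPowerSeries.X 0) = PowerSeries.X := by
  ext n
  rw [coeff_A, MvPowerSeries.coeff_X, PowerSeries.coeff_X]
  by_cases h : n = 1
  · subst h; rw [if_pos, if_pos rfl]; simp [e]
  · rw [if_neg, if_neg h]
    intro hc
    exact h (by simpa [e_apply0, Finsupp.single_apply] using congrArg (fun f => f 0) hc)

lemma A_X1 : A (MvPowerSeries.X 1) = 0 := by
  ext n
  rw [coeff_A, MvPowerSeries.coeff_X, map_zero, if_neg]
  intro hc
  simpa [e_apply1, Finsupp.single_apply] using congrArg (fun f => f 1) hc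

lemma B_X0 : B (MvPowerSeries.X 0) = 0 := by
  ext n
  rw [coeff_B, MvPowerSeries.coeff_X, map_zero, if_neg]
  intro hc
  simpa [e_apply1, Finsupp.single_apply] using congrArg (fun f => f 1) hc

lemma B_X1 : B (MvPowerSeries.X 1) = 1 := by
  ext n
  rw [coeff_B, MvPowerSeries.coeff_X, PowerSeries.coeff_one]
  by_cases h : n = 0
  · subst h; rw [if_pos, if_pos rfl]; simp [e]
  · rw [if_neg, if_neg h]
    intro hc
    exact h (by simpa [e_apply0, Finsupp.single_apply] using congrArg (fun f => f 0) hc)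

lemma A_sub (F H) : A (F - H) = A F - A H := by
  ext n; simp [coeff_A]
lemma B_sub (F H) : B (F - H) = B F - B H := by
  ext n; simp [coeff_B]

lemma A_const (F) : PowerSeries.constantCoeff (A F) = MvPowerSeries.constantCoeff F := by
  rw [← PowerSeries.coeff_zero_eq_constantCoeff, coeff_A]
  have : e 0 0 = 0 := by simp [e]
  rw [this]
  rfl


lemma uniq (f g : PowerSeries ℚ) (hf0 : PowerSeries.constantCoeff f = 0)
    (hg0 : PowerSeries.constantCoeff g = 0)
    (hf : f = PowerSeries.X + (1/2:ℚ) • f ^ 2)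
    (hg : g = PowerSeries.X + (1/2:ℚ) • g ^ 2) : f = g := by
  ext n
  induction n using Nat.strong_induction_on with
  | _ n ih =>
    conv_lhs => rw [hf]
    conv_rhs => rw [hg]
    simp only [map_add, map_smul, pow_two, PowerSeries.coeff_mul, smul_eq_mul]
    congr 2
    apply Finset.sum_congr rfl
    intro p hp
    rw [Finset.HasAntidiagonal.mem_antidiagonal] at hp
    rcases Nat.eq_zero_or_pos p.1 with h1 | h1
    · rw [h1, PowerSeries.coeff_zero_eq_constantCoeff, hf0, hg0, zero_mul, zero_mul]
    rcases Nat.eq_zero_or_pos p.2 with h2 | h2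
    · rw [h2, PowerSeries.coeff_zero_eq_constantCoeff, hf0, hg0, mul_zero, mul_zero]
    have l1 : p.1 < n := by omega
    have l2 : p.2 < n := by omega
    rw [ih p.1 l1, ih p.2 l2]


end
end GalledAux

open GalledAux
/-- For every `n ≥ 0`, the coefficient of `tⁿu¹` in the bivariate generating function
`G` of leaf-labeled time-consistent galled trees equals the coefficient of `tⁿ` in
`E1 := (1/2)·U³·(1-U)⁻³`, the EGF of those with exactly one gall.  Here `U` is the
unique series in `ℚ[[t]]` with zero constant coefficient satisfying `U = t + U²/2`,
and `G` is the unique series in `ℚ[[t,u]]` with zero constant coefficient satisfying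
`G = t + G²/2 + (u·G/2)·(G·(1-G)⁻¹)²`. -/
theorem stmt_10 (U E1 : PowerSeries ℚ) (hU0 : PowerSeries.constantCoeff U = 0)
    (hU : U = PowerSeries.X + (1 / 2 : ℚ) • U ^ 2)
    (hE1 : E1 = (1 / 2 : ℚ) • (U ^ 3 * ((1 - U)⁻¹) ^ 3))
    (G : MvPowerSeries (Fin 2) ℚ) (hG0 : MvPowerSeries.constantCoeff G = 0)
    (hG : G = MvPowerSeries.X 0 + (1 / 2 : ℚ) • G ^ 2
        + ((1 / 2 : ℚ) • (MvPowerSeries.X 1 * G)) * (G * (1 - G)⁻¹) ^ 2) :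
    ∀ n : ℕ,
      MvPowerSeries.coeff (Finsupp.single (0 : Fin 2) n + Finsupp.single 1 1) G
        = PowerSeries.coeff n E1 := by
  classical
  set W : MvPowerSeries (Fin 2) ℚ := G * (1 - G)⁻¹ with hWdef
  set a := A G with hadef
  set b := B G with hbdef
  set w := A W with hwdef
  -- constant coefficient facts
  have hcG : MvPowerSeries.constantCoeff (1 - G) ≠ 0 := by
    rw [map_sub, map_one, hG0, sub_zero]; exact one_ne_zero
  have hWeq : (1 - G) * W = G := by
    rw [hWdef, mul_comm (1 - G), mul_assoc, MvPowerSeries.inv_mul_cancel _ hcG, mul_one]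
  -- a satisfies the U equation
  have ha : a = PowerSeries.X + (1/2:ℚ) • a ^ 2 := by
    conv_lhs => rw [hadef, hG]
    rw [A_add, A_add, A_smul, pow_two G, A_mul, A_mul, A_smul, A_mul, A_X1, zero_mul,
      smul_zero, zero_mul, add_zero, A_X0, ← hadef, ← pow_two]
  have ha0 : PowerSeries.constantCoeff a = 0 := by rw [hadef, A_const]; exact hG0
  have haU : a = U := uniq a U ha0 hU0 ha hU
  -- w relation
  have hw : (1 - a) * w = a := by
    have h := congrArg A hWeq
    rwa [A_mul, A_sub, A_one, ← hadef, ← hwdef] at h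
  -- b relation
  have hb : b = a * b + (1/2:ℚ) • a * w ^ 2 := by
    conv_lhs => rw [hbdef, hG]
    rw [B_add, B_add, B_X0, zero_add, B_smul, pow_two G, B_mul, ← hbdef, ← hadef]
    rw [B_mul, A_smul, A_mul, A_X1, zero_mul, smul_zero, zero_mul, zero_add]
    rw [B_smul, B_mul, A_X1, zero_mul, B_X1, one_mul, zero_add, ← hadef]
    rw [pow_two W, A_mul, ← hwdef, ← pow_two]
    rw [mul_comm b a, ← two_smul ℚ (a*b), smul_smul]
    norm_num
  -- PowerSeries inverse facts
  set v : PowerSeries ℚ := (1 - U)⁻¹ with hvdef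
  have hcU : PowerSeries.constantCoeff (1 - U) ≠ 0 := by
    rw [map_sub, map_one, hU0, sub_zero]; exact one_ne_zero
  have hUne : (1 - U : PowerSeries ℚ) ≠ 0 := fun h => hcU (by rw [h, map_zero])
  have hv : (1 - U) * v = 1 := PowerSeries.mul_inv_cancel _ hcU
  rw [haU] at hw hb
  -- w = U * v
  have hwUv : w = U * v := by
    apply mul_left_cancel₀ hUne
    rw [hw, show (1-U) * (U * v) = U * ((1-U) * v) by ring, hv, mul_one]
  -- b = E1
  have hbE : b = E1 := by
    apply mul_left_cancel₀ hUne
    have h1 : (1 - U) * b = (1/2:ℚ) • U * w ^ 2 := by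
      rw [PowerSeries.smul_eq_C_mul] at hb ⊢
      linear_combination hb
    rw [h1, hE1, hwUv, PowerSeries.smul_eq_C_mul, PowerSeries.smul_eq_C_mul,
      show (1-U) * (PowerSeries.C (1/2) * (U^3 * v^3)) =
        PowerSeries.C (1/2) * (U^3 * v^2) * ((1-U) * v) by ring, hv, mul_one]
    ring
  intro n
  have : (Finsupp.single 0 n + Finsupp.single 1 1 : Fin 2 →₀ ℕ) = e n 1 := rfl
  rw [this, ← coeff_B, ← hbdef, hbE]
end

section
/- For every n ≥ 0, the coefficient of tⁿu² in G equals the coefficient of tⁿ in E2 := (1/2)·E1²·(1 − U)⁻¹ + (1/2)·E1·U²·(1 − U)⁻³ + E1·U²·(1 − U)⁻⁴; that is, extracting the coefficient of u² from the bivariate generating function G of leaf-labeled time-consistent galled trees yields the exponential generating function of those with exactly two galls. -/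
open Finsupp PowerSeries

section coeffLemmas
variable {S : Type*} [CommSemiring S]

lemma c0_mul' (f g : PowerSeries S) :
    PowerSeries.coeff (R := S) 0 (f * g) = PowerSeries.coeff (R := S) 0 f * PowerSeries.coeff (R := S) 0 g := by
  rw [PowerSeries.coeff_mul, show Finset.HasAntidiagonal.antidiagonal 0 = ({(0,0)} : Finset (ℕ×ℕ)) by decide,
    Finset.sum_singleton]

lemma c1_mul' (f g : PowerSeries S) :
    PowerSeries.coeff (R := S) 1 (f * g) = PowerSeries.coeff (R := S) 0 f * PowerSeries.coeff (R := S) 1 g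
      + PowerSeries.coeff (R := S) 1 f * PowerSeries.coeff (R := S) 0 g := by
  rw [PowerSeries.coeff_mul, show Finset.HasAntidiagonal.antidiagonal 1 = ({(0,1),(1,0)} : Finset (ℕ×ℕ)) by decide,
    Finset.sum_insert (by decide), Finset.sum_singleton]

lemma c2_mul' (f g : PowerSeries S) :
    PowerSeries.coeff (R := S) 2 (f * g) = PowerSeries.coeff (R := S) 0 f * PowerSeries.coeff (R := S) 2 g
      + PowerSeries.coeff (R := S) 1 f * PowerSeries.coeff (R := S) 1 g
      + PowerSeries.coeff (R := S) 2 f * PowerSeries.coeff (R := S) 0 g := by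
  rw [PowerSeries.coeff_mul,
    show Finset.HasAntidiagonal.antidiagonal 2 = ({(0,2),(1,1),(2,0)} : Finset (ℕ×ℕ)) by decide,
    Finset.sum_insert (by decide), Finset.sum_insert (by decide), Finset.sum_singleton]
  ring

end coeffLemmas

lemma fin2_decomp (f : Fin 2 →₀ ℕ) :
    Finsupp.single (0 : Fin 2) (f 0) + Finsupp.single 1 (f 1) = f := by
  ext i; fin_cases i <;> simp

lemma sadd_apply0 (n k : ℕ) :
    ((Finsupp.single (0 : Fin 2) n + Finsupp.single 1 k : Fin 2 →₀ ℕ)) 0 = n := by simp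

lemma sadd_apply1 (n k : ℕ) :
    ((Finsupp.single (0 : Fin 2) n + Finsupp.single 1 k : Fin 2 →₀ ℕ)) 1 = k := by simp

lemma sadd_eq_zero_iff (n k : ℕ) :
    (Finsupp.single (0 : Fin 2) n + Finsupp.single 1 k = 0) ↔ n = 0 ∧ k = 0 := by
  constructor
  · intro h
    constructor
    · simpa [sadd_apply0] using DFunLike.congr_fun h (0 : Fin 2)
    · simpa [sadd_apply1] using DFunLike.congr_fun h (1 : Fin 2)
  · rintro ⟨rfl, rfl⟩; simp

lemma slice_mul (F H : MvPowerSeries (Fin 2) ℚ) (n k : ℕ) :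
    MvPowerSeries.coeff (R := ℚ) (Finsupp.single 0 n + Finsupp.single 1 k) (F * H)
      = ∑ p ∈ Finset.HasAntidiagonal.antidiagonal n, ∑ q ∈ Finset.HasAntidiagonal.antidiagonal k,
          MvPowerSeries.coeff (R := ℚ) (Finsupp.single 0 p.1 + Finsupp.single 1 q.1) F *
          MvPowerSeries.coeff (R := ℚ) (Finsupp.single 0 p.2 + Finsupp.single 1 q.2) H := by
  rw [MvPowerSeries.coeff_mul, ← Finset.sum_product']
  refine Finset.sum_nbij' (fun x => ((x.1 0, x.2 0), (x.1 1, x.2 1)))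
    (fun y => (Finsupp.single 0 y.1.1 + Finsupp.single 1 y.2.1,
               Finsupp.single 0 y.1.2 + Finsupp.single 1 y.2.2)) ?_ ?_ ?_ ?_ ?_
  · intro x hx
    rw [Finset.HasAntidiagonal.mem_antidiagonal] at hx
    simp only [Finset.mem_product, Finset.HasAntidiagonal.mem_antidiagonal]
    constructor
    · have := DFunLike.congr_fun hx (0 : Fin 2)
      simpa [sadd_apply0] using this
    · have := DFunLike.congr_fun hx (1 : Fin 2)
      simpa [sadd_apply1] using this
  · intro y hy
    simp only [Finset.mem_product, Finset.HasAntidiagonal.mem_antidiagonal] at hy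
    rw [Finset.HasAntidiagonal.mem_antidiagonal]
    rw [show (Finsupp.single (0:Fin 2) y.1.1 + Finsupp.single 1 y.2.1) +
        (Finsupp.single 0 y.1.2 + Finsupp.single 1 y.2.2)
        = Finsupp.single 0 (y.1.1 + y.1.2) + Finsupp.single 1 (y.2.1 + y.2.2) by
      rw [Finsupp.single_add, Finsupp.single_add]; abel]
    rw [hy.1, hy.2]
  · intro x hx
    have h1 := fin2_decomp x.1
    have h2 := fin2_decomp x.2
    exact Prod.ext h1 h2
  · intro y hy
    simp [sadd_apply0, sadd_apply1]
  · intro x hx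
    simp only
    rw [fin2_decomp x.1, fin2_decomp x.2]

noncomputable def Phi : MvPowerSeries (Fin 2) ℚ →+* PowerSeries (PowerSeries ℚ) where
  toFun F := PowerSeries.mk fun k => PowerSeries.mk fun n =>
    MvPowerSeries.coeff (R := ℚ) (Finsupp.single 0 n + Finsupp.single 1 k) F
  map_one' := by
    refine PowerSeries.ext fun k => PowerSeries.ext fun n => ?_
    rw [PowerSeries.coeff_mk, PowerSeries.coeff_mk, MvPowerSeries.coeff_one]
    split_ifs with h
    · obtain ⟨rfl, rfl⟩ := (sadd_eq_zero_iff _ _).1 h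
      simp
    · rw [sadd_eq_zero_iff] at h
      rw [PowerSeries.coeff_one]
      split_ifs with hk
      · rw [PowerSeries.coeff_one]; split_ifs with hn <;> simp_all
      · simp_all
  map_mul' F H := by
    refine PowerSeries.ext fun k => PowerSeries.ext fun n => ?_
    rw [PowerSeries.coeff_mk, PowerSeries.coeff_mk, slice_mul,
      PowerSeries.coeff_mul, map_sum, Finset.sum_comm]
    refine Finset.sum_congr rfl fun q hq => ?_
    rw [PowerSeries.coeff_mul]
    refine Finset.sum_congr rfl fun p hp => ?_
    simp [PowerSeries.coeff_mk]
  map_zero' := by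
    refine PowerSeries.ext fun k => PowerSeries.ext fun n => ?_
    simp
  map_add' F H := by
    refine PowerSeries.ext fun k => PowerSeries.ext fun n => ?_
    simp

lemma Phi_apply (F : MvPowerSeries (Fin 2) ℚ) :
    Phi F = PowerSeries.mk fun k => PowerSeries.mk fun n =>
      MvPowerSeries.coeff (R := ℚ) (Finsupp.single 0 n + Finsupp.single 1 k) F := rfl

lemma Phi_coeff (F : MvPowerSeries (Fin 2) ℚ) (k : ℕ) :
    PowerSeries.coeff (R := PowerSeries ℚ) k (Phi F)
      = PowerSeries.mk (fun n =>
          MvPowerSeries.coeff (R := ℚ) (Finsupp.single 0 n + Finsupp.single 1 k) F) := by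
  rw [Phi_apply, PowerSeries.coeff_mk]


lemma Phi_X0 : Phi (MvPowerSeries.X 0) = PowerSeries.C (R := PowerSeries ℚ) PowerSeries.X := by
  refine PowerSeries.ext fun k => ?_
  rw [Phi_coeff, PowerSeries.coeff_C]
  refine PowerSeries.ext fun n => ?_
  rw [PowerSeries.coeff_mk, MvPowerSeries.coeff_X]
  by_cases hk : k = 0
  · subst hk
    rw [if_pos rfl, PowerSeries.coeff_X]
    by_cases hn : n = 1
    · subst hn; rw [if_pos (by simp), if_pos rfl]
    · rw [if_neg (fun h => hn (by
        simpa [sadd_apply0] using DFunLike.congr_fun h (0 : Fin 2))), if_neg hn]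
  · rw [if_neg hk, if_neg (fun h => hk (by
      have := DFunLike.congr_fun h (1 : Fin 2)
      rw [sadd_apply1] at this
      simpa using this)), map_zero]

lemma Phi_X1 : Phi (MvPowerSeries.X 1) = PowerSeries.X := by
  refine PowerSeries.ext fun k => ?_
  rw [Phi_coeff, PowerSeries.coeff_X]
  refine PowerSeries.ext fun n => ?_
  rw [PowerSeries.coeff_mk, MvPowerSeries.coeff_X]
  by_cases hk : k = 1
  · subst hk
    rw [if_pos rfl]
    by_cases hn : n = 0
    · subst hn; rw [if_pos (by simp), PowerSeries.coeff_one, if_pos rfl]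
    · rw [if_neg (fun h => hn (by
        simpa [sadd_apply0] using DFunLike.congr_fun h (0 : Fin 2))),
        PowerSeries.coeff_one, if_neg hn]
  · rw [if_neg hk, if_neg (fun h => hk (by
      have := DFunLike.congr_fun h (1 : Fin 2)
      rw [sadd_apply1] at this
      simpa [Finsupp.single_apply] using this)), map_zero]

lemma cancel_aux {x y : PowerSeries ℚ} (h1 : PowerSeries.constantCoeff (R := ℚ) y ≠ 0)
    (h : x * y = 0) : x = 0 := by
  rcases mul_eq_zero.1 h with h' | h'
  · exact h'
  · exact absurd (by rw [h', map_zero]) h1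

/-- For every `n ≥ 0`, the coefficient of `tⁿu²` in the bivariate generating function
`G` of leaf-labeled time-consistent galled trees equals the coefficient of `tⁿ` in
`E2 := (1/2)·E1²·(1-U)⁻¹ + (1/2)·E1·U²·(1-U)⁻³ + E1·U²·(1-U)⁻⁴`, the EGF of those
with exactly two galls.  Here `U` is the unique series in `ℚ[[t]]` with zero constant
coefficient satisfying `U = t + U²/2`, `E1 := (1/2)·U³·(1-U)⁻³`, and `G` is the
unique series in `ℚ[[t,u]]` with zero constant coefficient satisfying
`G = t + G²/2 + (u·G/2)·(G·(1-G)⁻¹)²`. -/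
theorem stmt_11 (U E1 E2 : PowerSeries ℚ) (hU0 : PowerSeries.constantCoeff U = 0)
    (hU : U = PowerSeries.X + (1 / 2 : ℚ) • U ^ 2)
    (hE1 : E1 = (1 / 2 : ℚ) • (U ^ 3 * ((1 - U)⁻¹) ^ 3))
    (hE2 : E2 = (1 / 2 : ℚ) • (E1 ^ 2 * (1 - U)⁻¹)
        + (1 / 2 : ℚ) • (E1 * U ^ 2 * ((1 - U)⁻¹) ^ 3)
        + E1 * U ^ 2 * ((1 - U)⁻¹) ^ 4)
    (G : MvPowerSeries (Fin 2) ℚ) (hG0 : MvPowerSeries.constantCoeff G = 0)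
    (hG : G = MvPowerSeries.X 0 + (1 / 2 : ℚ) • G ^ 2
        + ((1 / 2 : ℚ) • (MvPowerSeries.X 1 * G)) * (G * (1 - G)⁻¹) ^ 2) :
    ∀ n : ℕ,
      MvPowerSeries.coeff (Finsupp.single 0 n + Finsupp.single 1 2) G
        = PowerSeries.coeff n E2 := by
  classical
  -- MvPowerSeries-level preparations
  have hV : (1 - G) * (1 - G)⁻¹ = 1 :=
    MvPowerSeries.mul_inv_cancel _ (by simp [hG0])
  have h2M : (2 : MvPowerSeries (Fin 2) ℚ) * MvPowerSeries.C (σ := Fin 2) (R := ℚ) (1/2) = 1 := by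
    rw [show (2 : MvPowerSeries (Fin 2) ℚ) = MvPowerSeries.C (σ := Fin 2) (R := ℚ) 2 from
      (map_ofNat _ 2).symm, ← map_mul]
    norm_num
  have hGs : G = MvPowerSeries.X 0 + MvPowerSeries.C (σ := Fin 2) (R := ℚ) (1/2) * G ^ 2
      + (MvPowerSeries.C (σ := Fin 2) (R := ℚ) (1/2) * (MvPowerSeries.X 1 * G)) * (G * (1 - G)⁻¹) ^ 2 := by
    rw [← MvPowerSeries.smul_eq_C_mul, ← MvPowerSeries.smul_eq_C_mul]
    exact hG
  have star2 : 2*((1-G)^2*G)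
      = 2*((1-G)^2*(MvPowerSeries.X 0)) + (1-G)^2*G^2 + MvPowerSeries.X 1 * G^3 := by
    linear_combination (2*(1-G)^2) * hGs
      + ((1-G)^2*G^2 + MvPowerSeries.X 1*G^3*((1-G)⁻¹)^2*(1-G)^2) * h2M
      + (MvPowerSeries.X 1*G^3*((1-G)⁻¹*(1-G)+1)) * hV
  -- push through Phi
  have hP := congrArg Phi star2
  simp only [map_mul, map_add, map_pow, map_sub, map_one, map_ofNat, Phi_X0, Phi_X1] at hP
  set g := Phi G with hgdef
  have hA : (g + g) - (g*g + g*g + g*g + g*g) + (g*g*g + g*g*g)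
      = ((PowerSeries.C (R := PowerSeries ℚ) PowerSeries.X + PowerSeries.C (R := PowerSeries ℚ) PowerSeries.X)
          - (PowerSeries.C (R := PowerSeries ℚ) PowerSeries.X * g + PowerSeries.C (R := PowerSeries ℚ) PowerSeries.X * g
            + PowerSeries.C (R := PowerSeries ℚ) PowerSeries.X * g + PowerSeries.C (R := PowerSeries ℚ) PowerSeries.X * g)
          + (PowerSeries.C (R := PowerSeries ℚ) PowerSeries.X * (g*g) + PowerSeries.C (R := PowerSeries ℚ) PowerSeries.X * (g*g)))
        + (g*g - (g*g*g + g*g*g) + g*g*g*g) + PowerSeries.X*(g*g*g) := by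
    linear_combination hP
  -- coefficient extraction
  have E0 := congrArg (PowerSeries.coeff (R := PowerSeries ℚ) 0) hA
  have Eone := congrArg (PowerSeries.coeff (R := PowerSeries ℚ) 1) hA
  have Etwo := congrArg (PowerSeries.coeff (R := PowerSeries ℚ) 2) hA
  have if10 : (if (1:ℕ) = 0 then (PowerSeries.X : PowerSeries ℚ) else 0) = 0 := if_neg (by norm_num)
  have if20 : (if (2:ℕ) = 0 then (PowerSeries.X : PowerSeries ℚ) else 0) = 0 := if_neg (by norm_num)
  have if01 : (if (0:ℕ) = 1 then (1 : PowerSeries ℚ) else 0) = 0 := if_neg (by norm_num)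
  have if21 : (if (2:ℕ) = 1 then (1 : PowerSeries ℚ) else 0) = 0 := if_neg (by norm_num)
  simp only [map_add, map_sub, c0_mul', c1_mul', c2_mul', PowerSeries.coeff_C,
    PowerSeries.coeff_X, reduceIte, if10, if20, if01, if21, mul_zero, zero_mul,
    add_zero, zero_add, mul_one, one_mul] at E0 Eone Etwo
  set a := PowerSeries.coeff (R := PowerSeries ℚ) 0 g with hadef
  set b := PowerSeries.coeff (R := PowerSeries ℚ) 1 g with hbdef
  set c := PowerSeries.coeff (R := PowerSeries ℚ) 2 g with hcdef
  -- constant coefficient of a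
  have ha0 : PowerSeries.constantCoeff (R := ℚ) a = 0 := by
    have : a = PowerSeries.mk (fun m =>
        MvPowerSeries.coeff (R := ℚ) (Finsupp.single 0 m + Finsupp.single 1 0) G) := by
      rw [hadef, hgdef]; exact Phi_coeff G 0
    rw [this, ← PowerSeries.coeff_zero_eq_constantCoeff, PowerSeries.coeff_mk,
      show (Finsupp.single (0:Fin 2) 0 + Finsupp.single 1 0) = 0 by simp]
    simpa using hG0
  -- R-level constants
  have h2R : (2 : PowerSeries ℚ) * PowerSeries.C (R := ℚ) (1/2) = 1 := by
    rw [show (2 : PowerSeries ℚ) = PowerSeries.C (R := ℚ) 2 from (map_ofNat _ 2).symm, ← map_mul]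
    norm_num
  have hW : (1 - U) * (1 - U)⁻¹ = 1 :=
    PowerSeries.mul_inv_cancel _ (by simp [hU0])
  have hUs := hU
  rw [PowerSeries.smul_eq_C_mul] at hUs
  have hU2 : 2*U = 2*PowerSeries.X + U^2 := by
    linear_combination 2*hUs + U^2*h2R
  -- a = U
  have key0 : (2*a - 2*PowerSeries.X - a^2) * ((1-a)^2) = 0 := by
    linear_combination E0
  have h1a : PowerSeries.constantCoeff (R := ℚ) ((1-a)^2) ≠ 0 := by
    simp [ha0]
  have hA2 : 2*a = 2*PowerSeries.X + a^2 := by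
    have := cancel_aux h1a key0
    linear_combination this
  have keyU : (a - U) * (2 - (a + U)) = 0 := by
    linear_combination hA2 - hU2
  have haU : a = U := by
    have h2' : PowerSeries.constantCoeff (R := ℚ) (2 - (a + U)) ≠ 0 := by
      simp only [map_sub, map_add, map_ofNat, ha0, hU0]
      norm_num
    have := cancel_aux h2' keyU
    linear_combination this
  rw [haU] at Eone Etwo
  -- E1 identification
  have hE1s := hE1
  rw [PowerSeries.smul_eq_C_mul] at hE1s
  have hE1c : 2*E1*(1-U)^3 = U^3 := by
    linear_combination (2*(1-U)^3)*hE1s + (U^3*((1-U)⁻¹)^3*(1-U)^3)*h2R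
      + (U^3*(((1-U)⁻¹)^2*(1-U)^2+(1-U)⁻¹*(1-U)+1))*hW
  have F1 : 2*b*(1-U)^3 = U^3 := by
    linear_combination Eone + (2*b - 2*U*b)*hU2
  have hb : b = E1 := by
    have key : (b - E1) * (2*(1-U)^3) = 0 := by linear_combination F1 - hE1c
    have hne : PowerSeries.constantCoeff (R := ℚ) (2*(1-U)^3) ≠ 0 := by
      simp only [map_mul, map_pow, map_sub, map_one, map_ofNat, hU0]
      norm_num
    have := cancel_aux hne key
    linear_combination this
  rw [hb] at Etwo
  -- E2 identification
  have hE2s := hE2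
  rw [PowerSeries.smul_eq_C_mul, PowerSeries.smul_eq_C_mul] at hE2s
  have hE2c : 2*E2*(1-U)^4 = E1^2*(1-U)^3 + E1*U^2*(1-U) + 2*E1*U^2 := by
    linear_combination (2*(1-U)^4)*hE2s
      + (E1^2*(1-U)⁻¹*(1-U)^4 + E1*U^2*((1-U)⁻¹)^3*(1-U)^4)*h2R
      + (E1^2*(1-U)^3 + E1*U^2*(1-U)*(((1-U)⁻¹)^2*(1-U)^2+(1-U)⁻¹*(1-U)+1)
          + 2*E1*U^2*((1-U)⁻¹*(1-U)+1)*(((1-U)⁻¹)^2*(1-U)^2+1))*hW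
  have F2 : 2*c*(1-U)^3 = 3*U^2*E1 + 5*(1-U)^2*E1^2 := by
    linear_combination Etwo + (2*c - 2*U*c - E1^2)*hU2
  have hc : c = E2 := by
    have key : (c - E2) * (2*(1-U)^4) = 0 := by
      linear_combination (1-U)*F2 - hE2c + 2*E1*hE1c
    have hne : PowerSeries.constantCoeff (R := ℚ) (2*(1-U)^4) ≠ 0 := by
      simp only [map_mul, map_pow, map_sub, map_one, map_ofNat, hU0]
      norm_num
    have := cancel_aux hne key
    linear_combination this
  -- conclusion
  have hcoeff : c = PowerSeries.mk (fun m =>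
      MvPowerSeries.coeff (R := ℚ) (Finsupp.single 0 m + Finsupp.single 1 2) G) := by
    rw [hcdef, hgdef]; exact Phi_coeff G 2
  intro n
  rw [← hc, hcoeff, PowerSeries.coeff_mk]
end

section
/- The numbers e_{n,g} := n!·(coefficient of tⁿuᵍ in G) satisfy e_{1,0} = 1, e_{1,g} = 0 for g ≥ 1, and for all n ≥ 2 and g ≥ 0 the recursion e_{n,g} = (1/2)·[ Σ_{m=1}^{n−1} C(n, m)·Σ_{ℓ=0}^{g} e_{m,ℓ}·e_{n−m,g−ℓ} + Σ_{k=3}^{n} (k − 2)·Σ_{c ∈ C(n,k)} Σ_{d ∈ C(g−1+k,k)} multinomial(n; c₁, …, c_k)·Π_{i=1}^{k} e_{c_i, d_i − 1} ], where C(n, k) denotes the set of compositions of n into k positive parts and multinomial(n; c₁, …, c_k) = n!/(c₁!·⋯·c_k!). -/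
open MvPowerSeries Finsupp

namespace Galled

abbrev M := Fin 2 →₀ ℕ

noncomputable def s (i j : ℕ) : M := Finsupp.single 0 i + Finsupp.single 1 j

@[simp] lemma s_apply0 (i j : ℕ) : s i j 0 = i := by simp [s]
@[simp] lemma s_apply1 (i j : ℕ) : s i j 1 = j := by simp [s, Finsupp.single_apply]

lemma eq_s (m : M) : m = s (m 0) (m 1) := by
  ext x
  fin_cases x <;> simp [s, Finsupp.single_apply]

lemma s_add (i j i' j' : ℕ) : s i j + s i' j' = s (i + i') (j + j') := by
  ext x; fin_cases x <;> simp

lemma s_sum {k : ℕ} (a b : Fin k → ℕ) :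
    ∑ i, s (a i) (b i) = s (∑ i, a i) (∑ i, b i) := by
  simp [s, Finset.sum_add_distrib, Finsupp.single_finset_sum]

lemma coeff_X1_mul (Z : MvPowerSeries (Fin 2) ℚ) (m : M) :
    MvPowerSeries.coeff (R := ℚ) m (X 1 * Z) =
      if m 1 = 0 then 0 else MvPowerSeries.coeff (R := ℚ) (s (m 0) (m 1 - 1)) Z := by
  rw [show (X 1 : MvPowerSeries (Fin 2) ℚ) = monomial (R := ℚ) (Finsupp.single 1 1) 1 from rfl,
    coeff_monomial_mul]
  by_cases h : m 1 = 0
  · rw [if_neg, if_pos h]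
    rw [Finsupp.single_le_iff]; omega
  · rw [if_pos, if_neg h, one_mul]
    · have hm : m - Finsupp.single 1 1 = s (m 0) (m 1 - 1) := by
        ext x
        rw [Finsupp.tsub_apply]
        fin_cases x <;> simp [Finsupp.single_apply]
      rw [hm]
    · rw [Finsupp.single_le_iff]; omega

lemma coeff_X0 (m : M) :
    MvPowerSeries.coeff (R := ℚ) m (X 0 : MvPowerSeries (Fin 2) ℚ) =
      if m = Finsupp.single 0 1 then 1 else 0 := coeff_X m 0


/-- every coefficient of f at a monomial with t-degree < N vanishes -/
def Dge (N : ℕ) (f : MvPowerSeries (Fin 2) ℚ) : Prop :=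
  ∀ m : M, m 0 < N → MvPowerSeries.coeff (R := ℚ) m f = 0

lemma Dge_mul_right {N f} (h : Dge N f) (g : MvPowerSeries (Fin 2) ℚ) : Dge N (f * g) := by
  intro m hm
  rw [MvPowerSeries.coeff_mul]
  apply Finset.sum_eq_zero
  intro p hp
  rw [Finset.HasAntidiagonal.mem_antidiagonal] at hp
  have h0 : p.1 0 ≤ m 0 := by
    have := congrArg (fun m : M => m 0) hp
    simp at this; omega
  rw [h p.1 (lt_of_le_of_lt h0 hm), zero_mul]

lemma Dge_mul {N N' f g} (hf : Dge N f) (hg : Dge N' g) : Dge (N + N') (f * g) := by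
  intro m hm
  rw [MvPowerSeries.coeff_mul]
  apply Finset.sum_eq_zero
  intro p hp
  rw [Finset.HasAntidiagonal.mem_antidiagonal] at hp
  have h0 : p.1 0 + p.2 0 = m 0 := by
    have := congrArg (fun m : M => m 0) hp; simpa using this
  rcases lt_or_ge (p.1 0) N with h1 | h1
  · rw [hf p.1 h1, zero_mul]
  · rw [hg p.2 (by omega), mul_zero]

lemma Dge_pow {N f} (hf : Dge N f) (k : ℕ) : Dge (k * N) (f ^ k) := by
  induction k with
  | zero => intro m hm; omega
  | succ k ih =>
      rw [pow_succ]
      have := Dge_mul ih hf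
      rwa [show k * N + N = (k+1) * N by ring] at this

lemma Dge_smul {N f} (hf : Dge N f) (c : ℚ) : Dge N (c • f) := by
  intro m hm; rw [MvPowerSeries.coeff_smul, hf m hm, mul_zero]

lemma Dge_sub {N f g} (hf : Dge N f) (hg : Dge N g) : Dge N (f - g) := by
  intro m hm
  rw [map_sub, hf m hm, hg m hm, sub_zero]

section Main

variable (G : MvPowerSeries (Fin 2) ℚ)
    (hG0 : MvPowerSeries.constantCoeff (σ := Fin 2) (R := ℚ) G = 0)
    (hG : G = MvPowerSeries.X 0 + (1 / 2 : ℚ) • G ^ 2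
        + ((1 / 2 : ℚ) • (MvPowerSeries.X 1 * G)) * (G * (1 - G)⁻¹) ^ 2)

include hG0 hG

lemma pureU : ∀ g : ℕ, MvPowerSeries.coeff (R := ℚ) (s 0 g) G = 0 := by
  intro g
  induction g using Nat.strong_induction_on with
  | _ g ih =>
  rcases Nat.eq_zero_or_pos g with rfl | hg
  · have h0 : s 0 0 = 0 := by ext x; fin_cases x <;> simp
    rw [h0, coeff_zero_eq_constantCoeff_apply, hG0]
  · conv_lhs => rw [hG]
    rw [map_add, map_add]
    have t1 : MvPowerSeries.coeff (R := ℚ) (s 0 g) (X 0 : MvPowerSeries (Fin 2) ℚ) = 0 := by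
      rw [coeff_X0, if_neg]
      intro h
      have := congrArg (fun m : M => m 0) h
      simp [Finsupp.single_apply] at this
    have t2 : MvPowerSeries.coeff (R := ℚ) (s 0 g) ((1 / 2 : ℚ) • G ^ 2) = 0 := by
      rw [MvPowerSeries.coeff_smul, pow_two, MvPowerSeries.coeff_mul]
      rw [Finset.sum_eq_zero, mul_zero]
      intro p hp
      rw [Finset.HasAntidiagonal.mem_antidiagonal] at hp
      have h0 : p.1 0 + p.2 0 = 0 := by
        have := congrArg (fun m : M => m 0) hp; simpa using this
      have h1 : p.1 1 + p.2 1 = g := by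
        have := congrArg (fun m : M => m 1) hp; simpa using this
      rcases Nat.lt_or_ge (p.1 1) g with hl | hl
      · rw [eq_s p.1, show p.1 0 = 0 by omega]
        rw [ih _ hl, zero_mul]
      · rw [eq_s p.2, show p.2 0 = 0 by omega, show p.2 1 = 0 by omega]
        rw [ih 0 hg, mul_zero]
    have t3 : MvPowerSeries.coeff (R := ℚ) (s 0 g)
        (((1 / 2 : ℚ) • (MvPowerSeries.X 1 * G)) * (G * (1 - G)⁻¹) ^ 2) = 0 := by
      rw [show ((1 / 2 : ℚ) • (MvPowerSeries.X 1 * G)) * (G * (1 - G)⁻¹) ^ 2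
          = (1 / 2 : ℚ) • (MvPowerSeries.X 1 * (G * (G * (1 - G)⁻¹) ^ 2)) by
        rw [smul_mul_assoc, mul_assoc]]
      rw [MvPowerSeries.coeff_smul, coeff_X1_mul, if_neg (by simpa using hg.ne')]
      rw [s_apply0, s_apply1, MvPowerSeries.coeff_mul, Finset.sum_eq_zero, mul_zero]
      intro p hp
      rw [Finset.HasAntidiagonal.mem_antidiagonal] at hp
      have h0 : p.1 0 + p.2 0 = 0 := by
        have := congrArg (fun m : M => m 0) hp; simpa using this
      have h1 : p.1 1 + p.2 1 = g - 1 := by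
        have := congrArg (fun m : M => m 1) hp; simpa using this
      rw [eq_s p.1, show p.1 0 = 0 by omega, ih (p.1 1) (by omega), zero_mul]
    rw [t1, t2, t3, add_zero, add_zero]

lemma DG1 : Dge 1 G := by
  intro m hm
  rw [eq_s m, show m 0 = 0 by omega]
  exact pureU G hG0 hG (m 1)

omit hG0 hG in
lemma telescope (n : ℕ) (hn : 2 ≤ n) :
    (∑ k ∈ Finset.Icc 3 n, ((k : ℚ) - 2) • G ^ k) * (1 - G) ^ 2
      = G ^ 3 - ((((n : ℚ) - 1) • G ^ (n + 1)) - (((n : ℚ) - 2) • G ^ (n + 2))) := by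
  induction n with
  | zero => omega
  | succ n ih =>
    rcases Nat.lt_or_ge n 2 with h2 | h2
    · interval_cases n
      · omega
      · norm_num
    · rw [Finset.sum_Icc_succ_top (by omega), add_mul, ih h2]
      simp only [MvPowerSeries.smul_eq_C_mul, map_sub, map_add, map_one, map_natCast,
        map_ofNat]
      push_cast
      ring

omit hG in
lemma W_key (n : ℕ) (hn : 2 ≤ n) :
    G * (G * (1 - G)⁻¹) ^ 2
      = (∑ k ∈ Finset.Icc 3 n, ((k : ℚ) - 2) • G ^ k)
        + ((((n : ℚ) - 1) • G ^ (n + 1)) - (((n : ℚ) - 2) • G ^ (n + 2))) * ((1 - G)⁻¹) ^ 2 := by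
  set J := (1 - G)⁻¹ with hJdef
  have hu : (1 - G) * J = 1 := by
    apply MvPowerSeries.mul_inv_cancel
    rw [map_sub, map_one, hG0, sub_zero]
    norm_num
  set S := ∑ k ∈ Finset.Icc 3 n, ((k : ℚ) - 2) • G ^ k with hSdef
  set R := (((n : ℚ) - 1) • G ^ (n + 1)) - (((n : ℚ) - 2) • G ^ (n + 2)) with hRdef
  have hS : S = (G ^ 3 - R) * J ^ 2 := by
    calc S = S * ((1 - G) * J) ^ 2 := by rw [hu]; ring
    _ = (S * (1 - G) ^ 2) * J ^ 2 := by ring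
    _ = (G ^ 3 - R) * J ^ 2 := by rw [hSdef, telescope G n hn, ← hRdef]
  calc G * (G * J) ^ 2 = (G ^ 3 - R) * J ^ 2 + R * J ^ 2 := by ring
  _ = S + R * J ^ 2 := by rw [← hS]


lemma coeff_pow_eq (k n g' : ℕ) :
    (n.factorial : ℚ) * MvPowerSeries.coeff (R := ℚ) (s n g') (G ^ k)
      = ∑ c ∈ (Finset.Nat.antidiagonalTuple k n).filter (fun c => ∀ i, 0 < c i),
          ∑ d ∈ (Finset.Nat.antidiagonalTuple k (g' + k)).filter (fun d => ∀ i, 0 < d i),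
            (Nat.multinomial Finset.univ c : ℚ) *
              ∏ i, (((c i).factorial : ℚ) * MvPowerSeries.coeff (R := ℚ) (s (c i) (d i - 1)) G) := by
  classical
  rw [show G ^ k = ∏ _i : Fin k, G by rw [Finset.prod_const, Finset.card_univ, Fintype.card_fin]]
  rw [MvPowerSeries.coeff_prod, Finset.mul_sum]
  rw [← Finset.sum_filter_of_ne
    (p := fun l : Fin k →₀ M => ∀ i, 0 < (l i) 0) ?_]
  swap
  · intro l _ hne i
    by_contra hzero
    apply hne
    have hli : MvPowerSeries.coeff (R := ℚ) (l i) G = 0 := by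
      rw [eq_s (l i), show (l i) 0 = 0 by omega]
      exact pureU G hG0 hG _
    rw [Finset.prod_eq_zero (Finset.mem_univ i) hli, mul_zero]
  rw [← Finset.sum_product']
  apply Finset.sum_nbij'
    (i := fun l => ((fun i => (l i) 0), (fun i => (l i) 1 + 1)))
    (j := fun p => Finsupp.equivFunOnFinite.symm (fun i => s (p.1 i) (p.2 i - 1)))
  · intro l hl
    simp only [Finset.mem_filter, Finset.mem_finsuppAntidiag] at hl
    obtain ⟨⟨hsum, -⟩, hpos⟩ := hl
    have h0 : ∑ i, (l i) 0 = n := by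
      have := congrArg (fun m : M => m 0) hsum
      simpa [Finsupp.finset_sum_apply] using this
    have h1 : ∑ i, (l i) 1 = g' := by
      have := congrArg (fun m : M => m 1) hsum
      simpa [Finsupp.finset_sum_apply] using this
    simp only [Finset.mem_product, Finset.mem_filter, Finset.Nat.mem_antidiagonalTuple]
    refine ⟨⟨h0, hpos⟩, ⟨?_, fun i => by omega⟩⟩
    rw [Finset.sum_add_distrib, h1]
    simp
  · intro p hp
    simp only [Finset.mem_product, Finset.mem_filter, Finset.Nat.mem_antidiagonalTuple] at hp
    obtain ⟨⟨hc, hcpos⟩, ⟨hd, hdpos⟩⟩ := hp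
    simp only [Finset.mem_filter, Finset.mem_finsuppAntidiag]
    refine ⟨⟨?_, Finset.subset_univ _⟩, fun i => by simpa using hcpos i⟩
    have heq : Finset.univ.sum ⇑(Finsupp.equivFunOnFinite.symm
        (fun i => s (p.1 i) (p.2 i - 1))) = ∑ i, s (p.1 i) (p.2 i - 1) := rfl
    rw [heq, s_sum, hc, show ∑ i, (p.2 i - 1) = g' by
      have hds : ∑ i, p.2 i = ∑ i, ((p.2 i - 1) + 1) :=
        Finset.sum_congr rfl fun i _ => by have := hdpos i; omega
      rw [Finset.sum_add_distrib] at hds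
      simp only [Finset.sum_const, Finset.card_univ, Fintype.card_fin, smul_eq_mul,
        mul_one] at hds
      omega]
  · intro l hl
    ext i x
    simp only [Finsupp.coe_equivFunOnFinite_symm]
    rw [Nat.add_sub_cancel, ← eq_s]
  · intro p hp
    simp only [Finset.mem_product, Finset.mem_filter, Finset.Nat.mem_antidiagonalTuple] at hp
    obtain ⟨⟨-, -⟩, ⟨-, hdpos⟩⟩ := hp
    ext i
    · simp
    · simp only [Finsupp.coe_equivFunOnFinite_symm, s_apply1]
      have := hdpos i; omega
  · intro l hl
    simp only [Finset.mem_filter, Finset.mem_finsuppAntidiag] at hl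
    obtain ⟨⟨hsum, -⟩, hpos⟩ := hl
    have h0 : ∑ i, (l i) 0 = n := by
      have := congrArg (fun m : M => m 0) hsum
      simpa [Finsupp.finset_sum_apply] using this
    have keyN : (∏ i, ((l i) 0).factorial) * Nat.multinomial Finset.univ (fun i => (l i) 0)
        = n.factorial := by
      rw [Nat.multinomial_spec, h0]
    have key : (∏ i, (((l i) 0).factorial : ℚ))
        * (Nat.multinomial Finset.univ (fun i => (l i) 0) : ℚ) = (n.factorial : ℚ) := by
      exact_mod_cast congrArg (Nat.cast (R := ℚ)) keyN
    simp only [Finset.prod_mul_distrib, Nat.add_sub_cancel, ← eq_s]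
    set P := ∏ i, MvPowerSeries.coeff (R := ℚ) (l i) G with hP
    linear_combination (-P) * key

lemma W_eq (n : ℕ) (hn : 2 ≤ n) (m : M) (hm : m 0 = n) :
    MvPowerSeries.coeff (R := ℚ) m (G * (G * (1 - G)⁻¹) ^ 2)
      = ∑ k ∈ Finset.Icc 3 n, ((k : ℚ) - 2) * MvPowerSeries.coeff (R := ℚ) m (G ^ k) := by
  rw [W_key G hG0 n hn, map_add]
  have hR : Dge (n + 1)
      (((((n : ℚ) - 1) • G ^ (n + 1)) - (((n : ℚ) - 2) • G ^ (n + 2))) * ((1 - G)⁻¹) ^ 2) := by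
    apply Dge_mul_right
    apply Dge_sub
    · apply Dge_smul
      have := Dge_pow (DG1 G hG0 hG) (n + 1)
      simpa using this
    · apply Dge_smul
      intro m' hm'
      have := Dge_pow (DG1 G hG0 hG) (n + 2)
      exact this m' (by simp only [mul_one]; omega)
  rw [hR m (by omega), add_zero, map_sum]
  apply Finset.sum_congr rfl
  intro k _
  rw [MvPowerSeries.coeff_smul]

lemma sq_term (n g : ℕ) (hn : 2 ≤ n) :
    (n.factorial : ℚ) * MvPowerSeries.coeff (R := ℚ) (s n g) (G ^ 2)
      = ∑ m ∈ Finset.Ico 1 n, (n.choose m : ℚ) *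
          ∑ ℓ ∈ Finset.range (g + 1),
            ((m.factorial : ℚ) * MvPowerSeries.coeff (R := ℚ) (s m ℓ) G) *
              (((n - m).factorial : ℚ) * MvPowerSeries.coeff (R := ℚ) (s (n - m) (g - ℓ)) G) := by
  classical
  rw [pow_two, MvPowerSeries.coeff_mul]
  have h1 : ∑ p ∈ Finset.HasAntidiagonal.antidiagonal (s n g),
        MvPowerSeries.coeff (R := ℚ) p.1 G * MvPowerSeries.coeff (R := ℚ) p.2 G
      = ∑ q ∈ (Finset.range (n + 1)) ×ˢ (Finset.range (g + 1)),
          MvPowerSeries.coeff (R := ℚ) (s q.1 q.2) G *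
            MvPowerSeries.coeff (R := ℚ) (s (n - q.1) (g - q.2)) G := by
    apply Finset.sum_nbij' (i := fun p => (p.1 0, p.1 1))
      (j := fun q => (s q.1 q.2, s (n - q.1) (g - q.2)))
    · intro p hp
      rw [Finset.HasAntidiagonal.mem_antidiagonal] at hp
      have h0 : p.1 0 + p.2 0 = n := by
        have := congrArg (fun m : M => m 0) hp; simpa using this
      have h1 : p.1 1 + p.2 1 = g := by
        have := congrArg (fun m : M => m 1) hp; simpa using this
      simp only [Finset.mem_product, Finset.mem_range]
      omega
    · intro q hq
      simp only [Finset.mem_product, Finset.mem_range] at hq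
      rw [Finset.HasAntidiagonal.mem_antidiagonal]
      simp only
      rw [s_add]
      congr 1 <;> omega
    · intro p hp
      rw [Finset.HasAntidiagonal.mem_antidiagonal] at hp
      have h0 : p.1 0 + p.2 0 = n := by
        have := congrArg (fun m : M => m 0) hp; simpa using this
      have h1 : p.1 1 + p.2 1 = g := by
        have := congrArg (fun m : M => m 1) hp; simpa using this
      ext <;> simp only
      · rw [← eq_s]
      · rw [show n - p.1 0 = p.2 0 by omega, show g - p.1 1 = p.2 1 by omega, ← eq_s]
    · intro q hq
      simp
    · intro p hp
      rw [Finset.HasAntidiagonal.mem_antidiagonal] at hp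
      have h0 : p.1 0 + p.2 0 = n := by
        have := congrArg (fun m : M => m 0) hp; simpa using this
      have h1 : p.1 1 + p.2 1 = g := by
        have := congrArg (fun m : M => m 1) hp; simpa using this
      simp only
      rw [show n - p.1 0 = p.2 0 by omega, show g - p.1 1 = p.2 1 by omega, ← eq_s, ← eq_s]
  rw [h1, Finset.sum_product, Finset.mul_sum]
  rw [← Finset.sum_subset (show Finset.Ico 1 n ⊆ Finset.range (n + 1) by
    intro x hx; rw [Finset.mem_Ico] at hx; rw [Finset.mem_range]; omega) ?_]
  swap
  · intro x hx hx'
    rw [Finset.mem_range] at hx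
    rw [Finset.mem_Ico] at hx'
    have hx0 : x = 0 ∨ x = n := by omega
    have : ∀ j ∈ Finset.range (g + 1),
        MvPowerSeries.coeff (R := ℚ) (s x j) G * MvPowerSeries.coeff (R := ℚ) (s (n - x) (g - j)) G = 0 := by
      intro j _
      rcases hx0 with rfl | rfl
      · rw [pureU G hG0 hG, zero_mul]
      · rw [Nat.sub_self, pureU G hG0 hG, mul_zero]
    rw [Finset.sum_eq_zero this, mul_zero]
  apply Finset.sum_congr rfl
  intro i hi
  rw [Finset.mem_Ico] at hi
  rw [Finset.mul_sum, Finset.mul_sum]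
  apply Finset.sum_congr rfl
  intro j _
  have hfac : (n.choose i) * i.factorial * (n - i).factorial = n.factorial :=
    Nat.choose_mul_factorial_mul_factorial (by omega : i ≤ n)
  have hfacQ : (n.choose i : ℚ) * (i.factorial : ℚ) * ((n - i).factorial : ℚ)
      = (n.factorial : ℚ) := by exact_mod_cast congrArg (Nat.cast (R := ℚ)) hfac
  linear_combination (-(MvPowerSeries.coeff (R := ℚ) (s i j) G *
    MvPowerSeries.coeff (R := ℚ) (s (n - i) (g - j)) G)) * hfacQ

end Main

end Galled

/-- The numbers `e_{n,g} := n!·[tⁿuᵍ]G` (counting leaf-labeled time-consistent galled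
trees with `n` leaves and `g` galls) satisfy `e_{1,0} = 1`, `e_{1,g} = 0` for `g ≥ 1`,
and for `n ≥ 2`, `g ≥ 0` the recursion
`e_{n,g} = (1/2)·[ Σ_{m=1}^{n-1} C(n,m)·Σ_{ℓ=0}^{g} e_{m,ℓ}·e_{n-m,g-ℓ}
  + Σ_{k=3}^{n} (k-2)·Σ_{c ∈ C(n,k)} Σ_{d ∈ C(g-1+k,k)} multinomial(n; c)·Π_i e_{c_i, d_i - 1} ]`,
where `C(n,k)` is the set of compositions of `n` into `k` positive parts.  Here `G` is
the unique series in `ℚ[[t,u]]` with zero constant coefficient satisfying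
`G = t + G²/2 + (u·G/2)·(G·(1-G)⁻¹)²`. -/
theorem stmt_12 (G : MvPowerSeries (Fin 2) ℚ)
    (hG0 : MvPowerSeries.constantCoeff (σ := Fin 2) (R := ℚ) G = 0)
    (hG : G = MvPowerSeries.X 0 + (1 / 2 : ℚ) • G ^ 2
        + ((1 / 2 : ℚ) • (MvPowerSeries.X 1 * G)) * (G * (1 - G)⁻¹) ^ 2)
    (e : ℕ → ℕ → ℚ)
    (he : ∀ n g : ℕ, e n g = (n.factorial : ℚ) *
        MvPowerSeries.coeff (R := ℚ) (Finsupp.single 0 n + Finsupp.single 1 g) G)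
    (comps : ℕ → (k : ℕ) → Finset (Fin k → ℕ))
    (hcomps : ∀ n k : ℕ,
      comps n k = (Finset.Nat.antidiagonalTuple k n).filter fun c => ∀ i, 0 < c i) :
    e 1 0 = 1 ∧ (∀ g : ℕ, 1 ≤ g → e 1 g = 0) ∧
    (∀ n : ℕ, 2 ≤ n → ∀ g : ℕ,
      e n g = (1 / 2) *
        ((∑ m ∈ Finset.Ico 1 n, (n.choose m : ℚ) *
            ∑ ℓ ∈ Finset.range (g + 1), e m ℓ * e (n - m) (g - ℓ))
          + ∑ k ∈ Finset.Icc 3 n, ((k : ℚ) - 2) *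
              ∑ c ∈ comps n k, ∑ d ∈ comps (g + k - 1) k,
                (Nat.multinomial Finset.univ c : ℚ) * ∏ i, e (c i) (d i - 1))) := by
  classical
  have he' : ∀ a b : ℕ, e a b = (a.factorial : ℚ) *
      MvPowerSeries.coeff (R := ℚ) (Galled.s a b) G := fun a b => he a b
  -- coefficient splitting of the functional equation
  have hsplit : ∀ m : Galled.M, m ≠ Finsupp.single 0 1 →
      MvPowerSeries.coeff (R := ℚ) m G
        = (1 / 2 : ℚ) * MvPowerSeries.coeff (R := ℚ) m (G ^ 2)
          + (1 / 2 : ℚ) * MvPowerSeries.coeff (R := ℚ) m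
              (MvPowerSeries.X 1 * (G * (G * (1 - G)⁻¹) ^ 2)) := by
    intro m hm
    conv_lhs => rw [hG]
    rw [map_add, map_add, Galled.coeff_X0, if_neg hm, MvPowerSeries.coeff_smul,
      show ((1 / 2 : ℚ) • (MvPowerSeries.X 1 * G)) * (G * (1 - G)⁻¹) ^ 2
          = (1 / 2 : ℚ) • (MvPowerSeries.X 1 * (G * (G * (1 - G)⁻¹) ^ 2)) by
        rw [smul_mul_assoc, mul_assoc],
      MvPowerSeries.coeff_smul, zero_add]
  have hcne : ∀ n g : ℕ, n ≠ 1 ∨ g ≠ 0 → Galled.s n g ≠ Finsupp.single 0 1 := by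
    intro n g h hcontra
    have h0 := congrArg (fun m : Galled.M => m 0) hcontra
    have h1 := congrArg (fun m : Galled.M => m 1) hcontra
    simp [Finsupp.single_apply] at h0 h1
    omega
  refine ⟨?_, ?_, ?_⟩
  · -- e 1 0 = 1
    have h10 : Finsupp.single 0 1 + Finsupp.single 1 0 = (Finsupp.single 0 1 : Galled.M) := by
      simp
    rw [he 1 0, h10]
    conv_lhs => rw [hG]
    rw [map_add, map_add, Galled.coeff_X0, if_pos rfl]
    have t2 : MvPowerSeries.coeff (R := ℚ) (Finsupp.single 0 1 : Galled.M) ((1 / 2 : ℚ) • G ^ 2)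
        = 0 := by
      rw [MvPowerSeries.coeff_smul, pow_two, MvPowerSeries.coeff_mul,
        Finset.sum_eq_zero, mul_zero]
      intro p hp
      rw [Finset.HasAntidiagonal.mem_antidiagonal] at hp
      have h0 : p.1 0 + p.2 0 = 1 := by
        have := congrArg (fun m : Galled.M => m 0) hp
        simpa [Finsupp.single_apply] using this
      rcases Nat.eq_zero_or_pos (p.1 0) with h | h
      · rw [Galled.eq_s p.1, h, Galled.pureU G hG0 hG, zero_mul]
      · rw [Galled.eq_s p.2, show p.2 0 = 0 by omega, Galled.pureU G hG0 hG, mul_zero]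
    have t3 : MvPowerSeries.coeff (R := ℚ) (Finsupp.single 0 1 : Galled.M)
        (((1 / 2 : ℚ) • (MvPowerSeries.X 1 * G)) * (G * (1 - G)⁻¹) ^ 2) = 0 := by
      rw [show ((1 / 2 : ℚ) • (MvPowerSeries.X 1 * G)) * (G * (1 - G)⁻¹) ^ 2
          = (1 / 2 : ℚ) • (MvPowerSeries.X 1 * (G * (G * (1 - G)⁻¹) ^ 2)) by
        rw [smul_mul_assoc, mul_assoc], MvPowerSeries.coeff_smul,
        Galled.coeff_X1_mul, if_pos (by simp [Finsupp.single_apply]), mul_zero]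
    rw [t2, t3]
    norm_num
  · -- e 1 g = 0 for g ≥ 1
    intro g hg
    rw [he' 1 g, hsplit (Galled.s 1 g) (hcne 1 g (Or.inr (by omega)))]
    have t2 : MvPowerSeries.coeff (R := ℚ) (Galled.s 1 g) (G ^ 2) = 0 := by
      rw [pow_two, MvPowerSeries.coeff_mul, Finset.sum_eq_zero]
      intro p hp
      rw [Finset.HasAntidiagonal.mem_antidiagonal] at hp
      have h0 : p.1 0 + p.2 0 = 1 := by
        have := congrArg (fun m : Galled.M => m 0) hp; simpa using this
      rcases Nat.eq_zero_or_pos (p.1 0) with h | h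
      · rw [Galled.eq_s p.1, h, Galled.pureU G hG0 hG, zero_mul]
      · rw [Galled.eq_s p.2, show p.2 0 = 0 by omega, Galled.pureU G hG0 hG, mul_zero]
    have t3 : MvPowerSeries.coeff (R := ℚ) (Galled.s 1 g)
        (MvPowerSeries.X 1 * (G * (G * (1 - G)⁻¹) ^ 2)) = 0 := by
      rw [Galled.coeff_X1_mul, if_neg (by simpa using Nat.one_le_iff_ne_zero.mp hg)]
      have hD : Galled.Dge 3 (G * (G * (1 - G)⁻¹) ^ 2) := by
        have h1 : Galled.Dge 1 (G * (1 - G)⁻¹) :=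
          Galled.Dge_mul_right (Galled.DG1 G hG0 hG) _
        have h2 := Galled.Dge_pow h1 2
        have := Galled.Dge_mul (Galled.DG1 G hG0 hG) h2
        simpa using this
      exact hD _ (by simp)
    rw [t2, t3]
    ring
  · -- main recursion
    intro n hn g
    have hA : (∑ m ∈ Finset.Ico 1 n, (n.choose m : ℚ) *
          ∑ ℓ ∈ Finset.range (g + 1), e m ℓ * e (n - m) (g - ℓ))
        = (n.factorial : ℚ) * MvPowerSeries.coeff (R := ℚ) (Galled.s n g) (G ^ 2) := by
      simp only [he']
      exact (Galled.sq_term G hG0 hG n g hn).symm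
    rcases Nat.eq_zero_or_pos g with rfl | hg
    · -- g = 0
      have hB : (∑ k ∈ Finset.Icc 3 n, ((k : ℚ) - 2) *
            ∑ c ∈ comps n k, ∑ d ∈ comps (0 + k - 1) k,
              (Nat.multinomial Finset.univ c : ℚ) * ∏ i, e (c i) (d i - 1)) = 0 := by
        apply Finset.sum_eq_zero
        intro k hk
        rw [Finset.mem_Icc] at hk
        have hempty : comps (0 + k - 1) k = ∅ := by
          rw [hcomps]
          rw [Finset.filter_eq_empty_iff]
          intro c hc hpos
          rw [Finset.Nat.mem_antidiagonalTuple] at hc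
          have : k ≤ ∑ i, c i := by
            calc k = ∑ _i : Fin k, 1 := by simp
            _ ≤ ∑ i, c i := Finset.sum_le_sum fun i _ => hpos i
          omega
        rw [hempty]
        simp
      rw [he' n 0, hsplit (Galled.s n 0) (hcne n 0 (Or.inl (by omega))), hB,
        Galled.coeff_X1_mul, if_pos (by simp)]
      rw [hA]
      ring
    · -- g ≥ 1
      have hB : (∑ k ∈ Finset.Icc 3 n, ((k : ℚ) - 2) *
            ∑ c ∈ comps n k, ∑ d ∈ comps (g + k - 1) k,
              (Nat.multinomial Finset.univ c : ℚ) * ∏ i, e (c i) (d i - 1))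
          = (n.factorial : ℚ) *
              MvPowerSeries.coeff (R := ℚ) (Galled.s n (g - 1)) (G * (G * (1 - G)⁻¹) ^ 2) := by
        rw [Galled.W_eq G hG0 hG n hn (Galled.s n (g - 1)) (by simp), Finset.mul_sum]
        apply Finset.sum_congr rfl
        intro k hk
        rw [show (n.factorial : ℚ) * (((k : ℚ) - 2) *
              MvPowerSeries.coeff (R := ℚ) (Galled.s n (g - 1)) (G ^ k))
            = ((k : ℚ) - 2) * ((n.factorial : ℚ) *
              MvPowerSeries.coeff (R := ℚ) (Galled.s n (g - 1)) (G ^ k)) by ring]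
        rw [Galled.coeff_pow_eq G hG0 hG k n (g - 1)]
        congr 1
        rw [hcomps, hcomps, show g + k - 1 = (g - 1) + k by omega]
        apply Finset.sum_congr rfl
        intro c _
        apply Finset.sum_congr rfl
        intro d _
        simp only [he']
      rw [he' n g, hsplit (Galled.s n g) (hcne n g (Or.inl (by omega))), hB, hA,
        Galled.coeff_X1_mul, if_neg (by simpa using Nat.one_le_iff_ne_zero.mp hg),
        Galled.s_apply0, Galled.s_apply1]
      ring
end

section
/- The unique solution X ∈ ℚ[[t]] of the functional equation X = 𝒰(t)·X + (𝒰(t)/2)·[(𝒰(t)·(1 − 𝒰(t))⁻¹)² + 𝒰(t²)·(1 − 𝒰(t²))⁻¹] is X = (1/2)·𝒰(t)³·(1 − 𝒰(t))⁻³ + (1/2)·𝒰(t)·𝒰(t²)·(1 − 𝒰(t))⁻¹·(1 − 𝒰(t²))⁻¹; this X is the ordinary generating function ℰ₁ of unlabeled time-consistent galled trees with exactly one gall. -/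
open PowerSeries

/-- `substSq F` is the formal power series `F(t²)` obtained from `F ∈ ℚ[[t]]` by
substituting `t²` for `t`. -/
noncomputable def substSq (F : PowerSeries ℚ) : PowerSeries ℚ :=
  PowerSeries.mk fun n => if 2 ∣ n then PowerSeries.coeff (n / 2) F else 0

/-- The unique solution `X ∈ ℚ[[t]]` of the functional equation
`X = 𝒰(t)·X + (𝒰(t)/2)·[(𝒰(t)·(1-𝒰(t))⁻¹)² + 𝒰(t²)·(1-𝒰(t²))⁻¹]` is
`X = (1/2)·𝒰(t)³·(1-𝒰(t))⁻³ + (1/2)·𝒰(t)·𝒰(t²)·(1-𝒰(t))⁻¹·(1-𝒰(t²))⁻¹`, the OGF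
`ℰ₁` of unlabeled time-consistent galled trees with exactly one gall.  Here `𝒰` is
the unique series with zero constant coefficient satisfying
`𝒰(t) = t + (1/2)·[𝒰(t)² + 𝒰(t²)]`. -/
theorem stmt_15 (U : PowerSeries ℚ) (h0 : constantCoeff U = 0)
    (hU : U = PowerSeries.X + (1 / 2 : ℚ) • (U ^ 2 + substSq U)) :
    ∀ X : PowerSeries ℚ,
      X = U * X + ((1 / 2 : ℚ) • U) *
          ((U * (1 - U)⁻¹) ^ 2 + substSq U * (1 - substSq U)⁻¹) ↔
      X = (1 / 2 : ℚ) • (U ^ 3 * ((1 - U)⁻¹) ^ 3)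
          + (1 / 2 : ℚ) • (U * substSq U * (1 - U)⁻¹ * (1 - substSq U)⁻¹) := by
  intro X
  set S := substSq U with hS
  have h1 : (1 - U) * (1 - U)⁻¹ = 1 := by
    apply PowerSeries.mul_inv_cancel
    simp [h0]
  set C := ((1 / 2 : ℚ) • U) * ((U * (1 - U)⁻¹) ^ 2 + S * (1 - S)⁻¹) with hC
  have key : X = U * X + C ↔ X = (1 - U)⁻¹ * C := by
    constructor
    · intro h
      linear_combination (1 - U)⁻¹ * h - X * h1
    · intro h
      linear_combination (1 - U) * h + C * h1
  rw [key, hC]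
  constructor
  · intro h; rw [h]; simp only [PowerSeries.smul_eq_C_mul]; ring
  · intro h; rw [h]; simp only [PowerSeries.smul_eq_C_mul]; ring
end

section
/- There exists a unique formal power series 𝒢 in ℚ[[t, u]] with constant coefficient 0 satisfying 𝒢(t,u) = t + (1/2)·[𝒢(t,u)² + 𝒢(t²,u²)] + (u·𝒢(t,u)/2)·[(𝒢(t,u)·(1 − 𝒢(t,u))⁻¹)² + 𝒢(t²,u²)·(1 − 𝒢(t²,u²))⁻¹], where 𝒢(t²,u²) denotes the substitution of t² for t and u² for u in 𝒢, and 1 − 𝒢(t,u) and 1 − 𝒢(t²,u²) are units since 𝒢 has constant coefficient 0. -/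
open MvPowerSeries

/-- `substSq2 F` is the bivariate formal power series `F(t², u²)` obtained from
`F ∈ ℚ[[t,u]]` by substituting `t²` for `t` and `u²` for `u`: its coefficient at a
monomial `t^a u^b` is the coefficient of `t^(a/2) u^(b/2)` in `F` when both `a` and
`b` are even, and `0` otherwise. -/
noncomputable def substSq2 (F : MvPowerSeries (Fin 2) ℚ) : MvPowerSeries (Fin 2) ℚ :=
  fun d =>
    if ∀ i, 2 ∣ d i then
      MvPowerSeries.coeff (d.mapRange (· / 2) (Nat.zero_div 2)) F
    else 0

namespace Stmt19Aux

abbrev PS := MvPowerSeries (Fin 2) ℚ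

/-- total degree of a monomial -/
def deg (d : Fin 2 →₀ ℕ) : ℕ := d 0 + d 1

/-- `Lo n F` : all coefficients of total degree `< n` vanish. -/
def Lo (n : ℕ) (F : PS) : Prop :=
  ∀ d : Fin 2 →₀ ℕ, deg d < n → MvPowerSeries.coeff d F = 0

lemma Lo_mono {m n : ℕ} {F : PS} (h : m ≤ n) (hF : Lo n F) : Lo m F :=
  fun d hd => hF d (lt_of_lt_of_le hd h)

lemma Lo_zero (n : ℕ) : Lo n (0 : PS) := fun d _ => by simp

lemma Lo_add {n : ℕ} {F G : PS} (hF : Lo n F) (hG : Lo n G) : Lo n (F + G) :=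
  fun d hd => by rw [map_add, hF d hd, hG d hd, add_zero]

lemma Lo_neg {n : ℕ} {F : PS} (hF : Lo n F) : Lo n (-F) :=
  fun d hd => by rw [map_neg, hF d hd, neg_zero]

lemma Lo_mul {m n : ℕ} {F K : PS} (hF : Lo m F) (hK : Lo n K) : Lo (m + n) (F * K) := by
  intro d hd
  rw [MvPowerSeries.coeff_mul]
  apply Finset.sum_eq_zero
  rintro ⟨p, q⟩ hpq
  rw [Finset.HasAntidiagonal.mem_antidiagonal] at hpq
  have hdeg : deg p + deg q = deg d := by
    rw [← hpq]; simp only [deg, Finsupp.add_apply]; ring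
  rcases lt_or_ge (deg p) m with h | h
  · rw [hF p h, zero_mul]
  · rw [hK q (by omega), mul_zero]

lemma Lo_mul_left {n : ℕ} (F : PS) {K : PS} (hK : Lo n K) : Lo n (F * K) := by
  have : Lo (0 + n) (F * K) := Lo_mul (fun d hd => absurd hd (by omega)) hK
  simpa using this

lemma Lo_mul_right {n : ℕ} {F : PS} (K : PS) (hF : Lo n F) : Lo n (F * K) := by
  have : Lo (n + 0) (F * K) := Lo_mul hF (fun d hd => absurd hd (by omega))
  simpa using this

lemma deg_lt_one_eq_zero {d : Fin 2 →₀ ℕ} (hd : deg d < 1) : d = 0 := by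
  have h : d 0 + d 1 < 1 := hd
  exact Finsupp.ext (Fin.forall_fin_two.2
    ⟨by simp only [Finsupp.coe_zero, Pi.zero_apply]; omega,
     by simp only [Finsupp.coe_zero, Pi.zero_apply]; omega⟩)

lemma lo_one {F : PS} (h : constantCoeff F = 0) : Lo 1 F := by
  intro d hd
  rw [deg_lt_one_eq_zero hd, MvPowerSeries.coeff_zero_eq_constantCoeff_apply, h]

lemma Lo_X (i : Fin 2) : Lo 1 (MvPowerSeries.X i : PS) := by
  intro d hd
  rw [MvPowerSeries.coeff_X, if_neg]
  intro h
  rw [deg_lt_one_eq_zero hd] at h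
  have := congrArg (fun f : Fin 2 →₀ ℕ => f i) h
  simp at this

lemma coeff_substSq2 (F : PS) (d : Fin 2 →₀ ℕ) :
    MvPowerSeries.coeff d (substSq2 F) =
      if ∀ i, 2 ∣ d i then
        MvPowerSeries.coeff (d.mapRange (· / 2) (Nat.zero_div 2)) F
      else 0 := by
  rw [MvPowerSeries.coeff_apply]; rfl

lemma substSq2_sub (F G : PS) : substSq2 (F - G) = substSq2 F - substSq2 G := by
  apply MvPowerSeries.ext
  intro d
  rw [map_sub, coeff_substSq2, coeff_substSq2, coeff_substSq2]
  split_ifs with h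
  · rw [map_sub]
  · rw [sub_zero]

lemma constantCoeff_substSq2 (F : PS) :
    constantCoeff (substSq2 F) = constantCoeff F := by
  rw [← MvPowerSeries.coeff_zero_eq_constantCoeff_apply,
    ← MvPowerSeries.coeff_zero_eq_constantCoeff_apply, coeff_substSq2]
  rw [if_pos (fun i => by simp)]
  rw [Finsupp.mapRange_zero]

lemma deg_mapRange (d : Fin 2 →₀ ℕ) :
    deg (d.mapRange (· / 2) (Nat.zero_div 2)) = d 0 / 2 + d 1 / 2 := by
  simp [deg, Finsupp.mapRange_apply]

lemma Lo_substSq2 {n : ℕ} {F : PS} (hF : Lo n F) : Lo n (substSq2 F) := by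
  intro d hd
  rw [coeff_substSq2]
  split_ifs with h
  · refine hF _ ?_
    have e := deg_mapRange d
    have h0 := h 0; have h1 := h 1
    have e2 : deg d = d 0 + d 1 := rfl
    omega
  · rfl

lemma Lo_substSq2_succ {n : ℕ} {F : PS} (hn : 1 ≤ n) (hF : Lo n F) :
    Lo (n + 1) (substSq2 F) := by
  intro d hd
  rw [coeff_substSq2]
  split_ifs with h
  · refine hF _ ?_
    have e := deg_mapRange d
    have h0 := h 0; have h1 := h 1
    have e2 : deg d = d 0 + d 1 := rfl
    omega
  · rfl

lemma Lo_all_zero {F : PS} (h : ∀ n, Lo n F) : F = 0 := by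
  apply MvPowerSeries.ext
  intro d
  rw [map_zero]
  exact h (deg d + 1) d (by omega)

lemma smul_eq_C_mul' (a : ℚ) (x : PS) :
    a • x = (MvPowerSeries.C a) * x := by
  apply MvPowerSeries.ext
  intro d
  rw [MvPowerSeries.coeff_C_mul, map_smul, smul_eq_mul]

lemma inv_one_sub_cancel {P : PS} (hP : constantCoeff P = 0) :
    (1 - P) * (1 - P)⁻¹ = 1 :=
  MvPowerSeries.mul_inv_cancel _ (by
    rw [map_sub, map_one, hP, sub_zero]; exact one_ne_zero)

lemma inv_diff {P Q : PS} (hP : constantCoeff P = 0)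
    (hQ : constantCoeff Q = 0) :
    (1 - P)⁻¹ - (1 - Q)⁻¹ = (1 - P)⁻¹ * (P - Q) * (1 - Q)⁻¹ := by
  have e1 := inv_one_sub_cancel hP
  have e2 := inv_one_sub_cancel hQ
  calc (1 - P)⁻¹ - (1 - Q)⁻¹
      = (1 - P)⁻¹ * ((1 - Q) * (1 - Q)⁻¹) - ((1 - P) * (1 - P)⁻¹) * (1 - Q)⁻¹ := by
        rw [e1, e2]; ring
    _ = (1 - P)⁻¹ * (P - Q) * (1 - Q)⁻¹ := by ring

/-- The fixed-point map. -/
noncomputable def Phi (G : PS) : PS :=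
  MvPowerSeries.X 0 + (1 / 2 : ℚ) • (G ^ 2 + substSq2 G)
    + ((1 / 2 : ℚ) • (MvPowerSeries.X 1 * G)) *
        ((G * (1 - G)⁻¹) ^ 2 + substSq2 G * (1 - substSq2 G)⁻¹)

lemma constantCoeff_Phi {G : PS} (h : constantCoeff G = 0) :
    constantCoeff (Phi G) = 0 := by
  unfold Phi
  rw [smul_eq_C_mul', smul_eq_C_mul']
  simp [map_add, map_mul, map_pow, h, constantCoeff_substSq2]

lemma contract {G H : PS} (hG : constantCoeff G = 0)
    (hH : constantCoeff H = 0) {n : ℕ} (hn : 1 ≤ n)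
    (h : Lo n (G - H)) : Lo (n + 1) (Phi G - Phi H) := by
  set A := (1 - G)⁻¹ with hA
  set A' := (1 - H)⁻¹ with hA'
  set SG := substSq2 G with hSGdef
  set SH := substSq2 H with hSHdef
  set BA := (1 - SG)⁻¹ with hBA
  set BA' := (1 - SH)⁻¹ with hBA'
  have hG1 : Lo 1 G := lo_one hG
  have hH1 : Lo 1 H := lo_one hH
  have hcSG : constantCoeff SG = 0 := by
    rw [hSGdef, constantCoeff_substSq2]; exact hG
  have hcSH : constantCoeff SH = 0 := by
    rw [hSHdef, constantCoeff_substSq2]; exact hH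
  have hS : Lo n (SG - SH) := by
    rw [hSGdef, hSHdef, ← substSq2_sub]; exact Lo_substSq2 h
  have hSsucc : Lo (n + 1) (SG - SH) := by
    rw [hSGdef, hSHdef, ← substSq2_sub]; exact Lo_substSq2_succ hn h
  have hAdiff : Lo n (A - A') := by
    rw [hA, hA', inv_diff hG hH]
    exact Lo_mul_right _ (Lo_mul_left _ h)
  have hBAdiff : Lo n (BA - BA') := by
    rw [hBA, hBA', inv_diff hcSG hcSH]
    exact Lo_mul_right _ (Lo_mul_left _ hS)
  have hGA : Lo n (G * A - H * A') := by
    have e : G * A - H * A' = (G - H) * A + H * (A - A') := by ring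
    rw [e]; exact Lo_add (Lo_mul_right _ h) (Lo_mul_left _ hAdiff)
  have hGA2 : Lo n ((G * A) ^ 2 - (H * A') ^ 2) := by
    have e : (G * A) ^ 2 - (H * A') ^ 2 = (G * A + H * A') * (G * A - H * A') := by ring
    rw [e]; exact Lo_mul_left _ hGA
  have hSB : Lo n (SG * BA - SH * BA') := by
    have e : SG * BA - SH * BA' = (SG - SH) * BA + SH * (BA - BA') := by ring
    rw [e]; exact Lo_add (Lo_mul_right _ hS) (Lo_mul_left _ hBAdiff)
  have hK : Lo n (((G * A) ^ 2 + SG * BA) - ((H * A') ^ 2 + SH * BA')) := by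
    have e : ((G * A) ^ 2 + SG * BA) - ((H * A') ^ 2 + SH * BA')
        = ((G * A) ^ 2 - (H * A') ^ 2) + (SG * BA - SH * BA') := by ring
    rw [e]; exact Lo_add hGA2 hSB
  have hSq : Lo (n + 1) (G ^ 2 - H ^ 2) := by
    have e : G ^ 2 - H ^ 2 = G * (G - H) + (G - H) * H := by ring
    rw [e]
    refine Lo_add ?_ (Lo_mul h hH1)
    have := Lo_mul hG1 h
    simpa [Nat.add_comm] using this
  have main : Phi G - Phi H = (MvPowerSeries.C (1 / 2)) *
      ((G ^ 2 - H ^ 2) + (SG - SH)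
        + (MvPowerSeries.X 1 * (G * (((G * A) ^ 2 + SG * BA) - ((H * A') ^ 2 + SH * BA')))
          + MvPowerSeries.X 1 * ((G - H) * ((H * A') ^ 2 + SH * BA')))) := by
    unfold Phi
    rw [smul_eq_C_mul', smul_eq_C_mul', smul_eq_C_mul', smul_eq_C_mul']
    rw [← hA, ← hA', ← hSGdef, ← hSHdef, ← hBA, ← hBA']
    ring
  rw [main]
  refine Lo_mul_left _ (Lo_add (Lo_add hSq hSsucc) (Lo_add ?_ ?_))
  · have := Lo_mul (Lo_X 1) (Lo_mul_left G hK)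
    simpa [Nat.add_comm] using this
  · have := Lo_mul (Lo_X 1) (Lo_mul_right ((H * A') ^ 2 + SH * BA') h)
    simpa [Nat.add_comm] using this

noncomputable def Gseq : ℕ → PS
  | 0 => 0
  | k + 1 => Phi (Gseq k)

lemma constantCoeff_Gseq (k : ℕ) : constantCoeff (Gseq k) = 0 := by
  induction k with
  | zero => simp [Gseq]
  | succ k ih => exact constantCoeff_Phi ih

lemma Lo_Gseq_succ (k : ℕ) : Lo (k + 1) (Gseq (k + 1) - Gseq k) := by
  induction k with
  | zero =>
    have h0 : constantCoeff (Gseq 1 - Gseq 0) = 0 := by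
      rw [map_sub, constantCoeff_Gseq, constantCoeff_Gseq, sub_zero]
    exact lo_one h0
  | succ k ih =>
    have : Lo (k + 1 + 1) (Phi (Gseq (k + 1)) - Phi (Gseq k)) :=
      contract (constantCoeff_Gseq _) (constantCoeff_Gseq _) (by omega) ih
    simpa [Gseq] using this

lemma Lo_Gseq_of_le (k : ℕ) : ∀ m, k ≤ m → Lo (k + 1) (Gseq m - Gseq k) := by
  intro m
  induction m with
  | zero =>
    intro hm
    have : k = 0 := by omega
    subst this
    simpa using Lo_zero 1
  | succ m ih =>
    intro hm
    rcases Nat.lt_or_ge k (m + 1) with h | h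
    · have hk : k ≤ m := by omega
      have e : Gseq (m + 1) - Gseq k = (Gseq (m + 1) - Gseq m) + (Gseq m - Gseq k) := by ring
      rw [e]
      exact Lo_add (Lo_mono (by omega) (Lo_Gseq_succ m)) (ih hk)
    · have : k = m + 1 := by omega
      subst this
      simpa using Lo_zero (m + 2)

noncomputable def Glim : PS := fun d => MvPowerSeries.coeff d (Gseq (deg d + 1))

lemma coeff_Glim (d : Fin 2 →₀ ℕ) :
    MvPowerSeries.coeff d Glim = MvPowerSeries.coeff d (Gseq (deg d + 1)) := by
  rw [MvPowerSeries.coeff_apply]; rfl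

lemma coeff_Glim_eq (d : Fin 2 →₀ ℕ) (k : ℕ) (h : deg d < k + 1) :
    MvPowerSeries.coeff d Glim = MvPowerSeries.coeff d (Gseq k) := by
  rw [coeff_Glim]
  rcases Nat.lt_or_ge k (deg d + 1) with hk | hk
  · have hle : k ≤ deg d + 1 := by omega
    have := Lo_Gseq_of_le k (deg d + 1) hle d h
    rw [map_sub, sub_eq_zero] at this
    exact this
  · have := Lo_Gseq_of_le (deg d + 1) k hk d (by omega)
    rw [map_sub, sub_eq_zero] at this
    exact this.symm

lemma Lo_Glim_sub (k : ℕ) : Lo (k + 1) (Glim - Gseq k) := by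
  intro d hd
  rw [map_sub, coeff_Glim_eq d k hd, sub_self]

lemma constantCoeff_Glim : constantCoeff Glim = 0 := by
  rw [← MvPowerSeries.coeff_zero_eq_constantCoeff_apply]
  have h := Lo_Glim_sub 0 0 (by simp [deg])
  rw [map_sub, sub_eq_zero] at h
  rw [h]
  show MvPowerSeries.coeff 0 (0 : PS) = 0
  simp

lemma Glim_fixed : Glim = Phi Glim := by
  rw [← sub_eq_zero]
  apply Lo_all_zero
  intro n
  apply Lo_mono (Nat.le_add_right n 2)
  have h1 : Lo (n + 2) (Glim - Gseq (n + 1)) := Lo_mono (by omega) (Lo_Glim_sub (n + 1))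
  have hd : Lo (n + 1) (Gseq n - Glim) := by
    have := Lo_neg (Lo_Glim_sub n)
    simpa [neg_sub] using this
  have h2 : Lo (n + 2) (Phi (Gseq n) - Phi Glim) :=
    contract (constantCoeff_Gseq n) constantCoeff_Glim (by omega) hd
  have e : Gseq (n + 1) = Phi (Gseq n) := by simp [Gseq]
  have e2 : Glim - Phi Glim = (Glim - Gseq (n + 1)) + (Phi (Gseq n) - Phi Glim) := by
    rw [e]; ring
  rw [e2]
  exact Lo_add h1 h2

lemma unique_fixed {G H : PS} (hG0 : constantCoeff G = 0)
    (hH0 : constantCoeff H = 0) (hG : G = Phi G) (hH : H = Phi H) :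
    G = H := by
  rw [← sub_eq_zero]
  apply Lo_all_zero
  intro n
  have key : ∀ m : ℕ, Lo (m + 1) (G - H) := by
    intro m
    induction m with
    | zero => exact lo_one (by rw [map_sub, hG0, hH0, sub_zero])
    | succ m ih =>
      have := contract hG0 hH0 (by omega) ih
      rwa [← hG, ← hH] at this
  exact Lo_mono (by omega) (key n)

end Stmt19Aux

/-- There exists a unique bivariate formal power series `𝒢 ∈ ℚ[[t,u]]` (with
`t = X 0`, `u = X 1`) with constant coefficient `0` satisfying
`𝒢(t,u) = t + (1/2)·[𝒢(t,u)² + 𝒢(t²,u²)]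
  + (u·𝒢(t,u)/2)·[(𝒢(t,u)·(1-𝒢(t,u))⁻¹)² + 𝒢(t²,u²)·(1-𝒢(t²,u²))⁻¹]`. -/
theorem stmt_19 :
    ∃! G : MvPowerSeries (Fin 2) ℚ, constantCoeff G = 0 ∧
      G = MvPowerSeries.X 0 + (1 / 2 : ℚ) • (G ^ 2 + substSq2 G)
          + ((1 / 2 : ℚ) • (MvPowerSeries.X 1 * G)) *
              ((G * (1 - G)⁻¹) ^ 2 + substSq2 G * (1 - substSq2 G)⁻¹) := by
  refine ⟨Stmt19Aux.Glim, ⟨Stmt19Aux.constantCoeff_Glim, Stmt19Aux.Glim_fixed⟩, ?_⟩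
  rintro H ⟨h0, hH⟩
  exact Stmt19Aux.unique_fixed h0 Stmt19Aux.constantCoeff_Glim hH Stmt19Aux.Glim_fixed
end
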